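/- arXiv:1606.07250 — 9 statements merged into one kernel-verified Lean document; each statement's English description precedes it below -/
import Mathlib

section
/- Let Λ be a finite family of dyadic intervals in [0,1], and for each x in E = ∪_{I∈Λ} I let I(x) denote the minimal interval of Λ containing x. Suppose ω is a weight and (v_I)_{I∈𝒟} positive reals such that ∑_{I∈𝒟, J⊆I} v_I^{−1} ≤ C·ω(J)^{−1} for all dyadic J. Then for every 1 ≤ p < ∞, (∑_{I∈Λ} ω(I)/v_I)^{1/p} ≤ C^{1/p}·(∫_E ω(I(x))^{−1} ω(x) dx)^{1/p}. -/
open MeasureTheory Set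

noncomputable def dyadicI (n k : ℕ) : Set ℝ := Set.Ico ((k : ℝ) / 2 ^ n) (((k : ℝ) + 1) / 2 ^ n)

def IsDyadic (I : ℕ × ℕ) : Prop := I.2 < 2 ^ I.1

noncomputable def wInt (w : ℝ → ℝ) (I : ℕ × ℕ) : ℝ := ∫ x in dyadicI I.1 I.2, w x

def ancestors (J : ℕ × ℕ) : Set (ℕ × ℕ) :=
  {I | IsDyadic I ∧ dyadicI J.1 J.2 ⊆ dyadicI I.1 I.2}

lemma dyadic_lt (n k : ℕ) : ((k : ℝ) / 2 ^ n) < ((k : ℝ) + 1) / 2 ^ n := by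
  have h : (0:ℝ) < 2 ^ n := by positivity
  exact (div_lt_div_iff_of_pos_right h).mpr (by linarith)

lemma dyadicI_measurable (n k : ℕ) : MeasurableSet (dyadicI n k) := measurableSet_Ico

lemma two_pow_cast_le {n m : ℕ} (h : (2:ℝ) ^ n ≤ 2 ^ m) : n ≤ m := by
  have h2 : ((2^n : ℕ) : ℝ) ≤ ((2^m : ℕ) : ℝ) := by push_cast; exact h
  exact (Nat.pow_le_pow_iff_right (by norm_num : 1 < 2)).mp (by exact_mod_cast h2)

lemma dyadic_eq_pair {n k m j : ℕ} (h : dyadicI n k = dyadicI m j) : (n, k) = (m, j) := by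
  have h2 := (Set.Ico_eq_Ico_iff (Or.inl (dyadic_lt n k))).mp h
  obtain ⟨ha, hb⟩ := h2
  have hn : (0:ℝ) < 2 ^ n := by positivity
  have hm : (0:ℝ) < 2 ^ m := by positivity
  rw [div_eq_div_iff (ne_of_gt hn) (ne_of_gt hm)] at ha hb
  have hpow : (2:ℝ) ^ m = 2 ^ n := by ring_nf at ha hb ⊢; linarith
  have hnm : n = m := le_antisymm (two_pow_cast_le (le_of_eq hpow.symm))
    (two_pow_cast_le (le_of_eq hpow))
  subst hnm
  have hk : (k:ℝ) = j := by
    have h2n : (2:ℝ)^n ≠ 0 := ne_of_gt hn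
    exact mul_right_cancel₀ h2n ha
  exact Prod.ext rfl (by exact_mod_cast hk)

lemma ancestors_level {J I : ℕ × ℕ} (h : I ∈ ancestors J) : I.1 ≤ J.1 ∧ I.2 < 2 ^ J.1 := by
  obtain ⟨hdy, hsub⟩ := h
  obtain ⟨ha, hb⟩ := (Set.Ico_subset_Ico_iff (dyadic_lt J.1 J.2)).mp hsub
  have hn : (0:ℝ) < 2 ^ J.1 := by positivity
  have hm : (0:ℝ) < 2 ^ I.1 := by positivity
  rw [div_le_div_iff₀ hm hn] at ha
  rw [div_le_div_iff₀ hn hm] at hb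
  have hpow : (2:ℝ) ^ I.1 ≤ 2 ^ J.1 := by ring_nf at ha hb ⊢; linarith
  have h1 : I.1 ≤ J.1 := two_pow_cast_le hpow
  exact ⟨h1, lt_of_lt_of_le hdy (Nat.pow_le_pow_right (by norm_num) h1)⟩

lemma ancestors_finite (J : ℕ × ℕ) : (ancestors J).Finite := by
  apply Set.Finite.subset (Set.finite_Iic (J.1, 2^J.1) (α := ℕ × ℕ))
  intro I hI
  obtain ⟨h1, h2⟩ := ancestors_level hI
  exact ⟨h1, le_of_lt h2⟩

lemma dyadic_subset_unit {n k : ℕ} (h : k < 2 ^ n) : dyadicI n k ⊆ Set.Ico (0:ℝ) 1 := by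
  apply Set.Ico_subset_Ico
  · positivity
  · rw [div_le_one (by positivity : (0:ℝ) < 2^n)]
    exact_mod_cast Nat.succ_le_of_lt h

theorem stmt1 (w : ℝ → ℝ) (v : ℕ × ℕ → ℝ) (C p : ℝ) (hC : 0 < C) (hp : 1 ≤ p)
    (hw : ∀ x, 0 ≤ w x) (hv : ∀ I, IsDyadic I → 0 < v I)
    (hpos : ∀ I, IsDyadic I → 0 < wInt w I)
    (hDRCC : ∀ J, IsDyadic J → ∑' I : ancestors J, (v I.1)⁻¹ ≤ C * (wInt w J)⁻¹)
    (Λ : Finset (ℕ × ℕ)) (hΛ : ∀ I ∈ Λ, IsDyadic I)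
    (sel : ℝ → ℕ × ℕ)
    (hsel : ∀ x ∈ ⋃ I ∈ Λ, dyadicI I.1 I.2,
      sel x ∈ Λ ∧ x ∈ dyadicI (sel x).1 (sel x).2 ∧
        ∀ J ∈ Λ, x ∈ dyadicI J.1 J.2 → dyadicI (sel x).1 (sel x).2 ⊆ dyadicI J.1 J.2) :
    (∑ I ∈ Λ, wInt w I / v I) ^ (1 / p) ≤
      C ^ (1 / p) *
        (∫ x in ⋃ I ∈ Λ, dyadicI I.1 I.2, (wInt w (sel x))⁻¹ * w x) ^ (1 / p) := by
  classical
  set E := ⋃ I ∈ Λ, dyadicI I.1 I.2 with hEdef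
  have hEmeas : MeasurableSet E :=
    MeasurableSet.biUnion Λ.countable_toSet fun I _ => dyadicI_measurable I.1 I.2
  have hdy00 : IsDyadic (0,0) := by simp [IsDyadic]
  have hint01 : IntegrableOn w (Set.Ico (0:ℝ) 1) := by
    by_contra h
    have hd : dyadicI 0 0 = Set.Ico (0:ℝ) 1 := by simp [dyadicI]
    have : wInt w (0,0) = 0 := by
      unfold wInt; simp only; rw [hd]; exact integral_undef h
    exact absurd this (ne_of_gt (hpos _ hdy00))
  have hintI : ∀ I ∈ Λ, IntegrableOn w (dyadicI I.1 I.2) := fun I hI =>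
    hint01.mono_set (dyadic_subset_unit (hΛ I hI))
  have hintE : IntegrableOn w E := by
    rw [hEdef, integrableOn_finset_iUnion]; exact hintI
  have hfE : ∀ I ∈ Λ, dyadicI I.1 I.2 ⊆ E := fun I hI x hx =>
    Set.mem_biUnion hI hx
  -- the partition sets
  set S : ℕ × ℕ → Set ℝ := fun I =>
    dyadicI I.1 I.2 \
      ⋃ J ∈ Λ.filter (fun J => ¬ dyadicI I.1 I.2 ⊆ dyadicI J.1 J.2), dyadicI J.1 J.2 with hSdef
  have hSmeas : ∀ I, MeasurableSet (S I) := fun I =>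
    (dyadicI_measurable I.1 I.2).diff
      (MeasurableSet.biUnion (Λ.filter _).countable_toSet fun J _ => dyadicI_measurable J.1 J.2)
  have hSiff : ∀ x ∈ E, ∀ I ∈ Λ, (x ∈ S I ↔ sel x = I) := by
    intro x hx I hI
    obtain ⟨hselΛ, hxsel, hmin⟩ := hsel x hx
    constructor
    · rintro ⟨hxI, hnb⟩
      have h1 : dyadicI (sel x).1 (sel x).2 ⊆ dyadicI I.1 I.2 := hmin I hI hxI
      have h2 : dyadicI I.1 I.2 ⊆ dyadicI (sel x).1 (sel x).2 := by
        by_contra hc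
        exact hnb (Set.mem_biUnion (Finset.mem_coe.mpr (Finset.mem_filter.mpr ⟨hselΛ, hc⟩)) hxsel)
      have heq := dyadic_eq_pair (Subset.antisymm h1 h2)
      simpa using heq
    · rintro rfl
      refine ⟨hxsel, fun hmem => ?_⟩
      obtain ⟨J, hJ, hxJ⟩ := Set.mem_iUnion₂.mp hmem
      obtain ⟨hJΛ, hns⟩ := Finset.mem_filter.mp hJ
      exact hns (hmin J hJΛ hxJ)
  set g : ℝ → ℝ := fun x =>
    ∑ I ∈ Λ, Set.indicator (S I) (fun y => (wInt w I)⁻¹ * w y) x with hgdef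
  have hgint : IntegrableOn g E :=
    integrable_finset_sum _ fun I _ => ((hintE.const_mul _).indicator (hSmeas I))
  have hgeq : ∀ x ∈ E, g x = (wInt w (sel x))⁻¹ * w x := by
    intro x hx
    obtain ⟨hselΛ, hxsel, hmin⟩ := hsel x hx
    rw [hgdef]
    simp only
    rw [Finset.sum_eq_single (sel x)]
    · rw [Set.indicator_of_mem ((hSiff x hx _ hselΛ).mpr rfl)]
    · intro I hI hne
      exact Set.indicator_of_notMem (fun hmem => hne ((hSiff x hx I hI).mp hmem).symm) _
    · intro h; exact absurd hselΛ h
  have key : ∑ I ∈ Λ, wInt w I / v I ≤ C * ∫ x in E, (wInt w (sel x))⁻¹ * w x := by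
    have lhs_eq : ∑ I ∈ Λ, wInt w I / v I
        = ∫ x in E, ∑ I ∈ Λ, Set.indicator (dyadicI I.1 I.2) (fun y => (v I)⁻¹ * w y) x := by
      rw [integral_finset_sum _ fun I _ => ((hintE.const_mul _).indicator (dyadicI_measurable I.1 I.2))]
      refine Finset.sum_congr rfl fun I hI => ?_
      rw [setIntegral_indicator (dyadicI_measurable I.1 I.2),
        Set.inter_eq_self_of_subset_right (hfE I hI), integral_const_mul _ _]
      rw [div_eq_inv_mul]
      rfl
    have hmono : ∫ x in E, (∑ I ∈ Λ, Set.indicator (dyadicI I.1 I.2) (fun y => (v I)⁻¹ * w y) x)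
        ≤ ∫ x in E, C * g x := by
      refine setIntegral_mono_on
        (integrable_finset_sum _ fun I _ => ((hintE.const_mul _).indicator (dyadicI_measurable I.1 I.2)))
        (hgint.const_mul C) hEmeas ?_
      intro x hx
      obtain ⟨hselΛ, hxsel, hmin⟩ := hsel x hx
      set F := Λ.filter (fun I => x ∈ dyadicI I.1 I.2) with hFdef
      have hsum : ∑ I ∈ Λ, Set.indicator (dyadicI I.1 I.2) (fun y => (v I)⁻¹ * w y) x
          = (∑ I ∈ F, (v I)⁻¹) * w x := by
        rw [hFdef, Finset.sum_filter, Finset.sum_mul]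
        refine Finset.sum_congr rfl fun I _ => ?_
        by_cases h : x ∈ dyadicI I.1 I.2 <;> simp [Set.indicator_apply, h]
      have hfin := ancestors_finite (sel x)
      have hsumle : ∑ I ∈ F, (v I)⁻¹ ≤ ∑' I : ancestors (sel x), (v I.1)⁻¹ := by
        have heq : ∑ I ∈ F, (v I)⁻¹
            = ∑ I ∈ F, Set.indicator (ancestors (sel x)) (fun I => (v I)⁻¹) I := by
          refine Finset.sum_congr rfl fun I hI => ?_
          obtain ⟨hIΛ, hxI⟩ := Finset.mem_filter.mp hI
          have hmemA : I ∈ ancestors (sel x) := ⟨hΛ I hIΛ, hmin I hIΛ hxI⟩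
          rw [Set.indicator_of_mem hmemA]
        have hts : ∑' (I : ↑(ancestors (sel x))), (v ↑I)⁻¹
            = ∑' I, (ancestors (sel x)).indicator (fun I => (v I)⁻¹) I :=
          tsum_subtype (ancestors (sel x)) (fun I => (v I)⁻¹)
        rw [hts, heq]
        refine Summable.sum_le_tsum F (fun I _ => Set.indicator_nonneg
          (fun J hJ => le_of_lt (inv_pos.mpr (hv J hJ.1))) I) ?_
        refine summable_of_ne_finset_zero (s := hfin.toFinset) fun I hI => ?_
        exact Set.indicator_of_notMem (fun hmem => hI (hfin.mem_toFinset.mpr hmem)) _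
      have hDR := (hsumle.trans (hDRCC (sel x) (hΛ _ hselΛ)))
      have hg_ge : (wInt w (sel x))⁻¹ * w x ≤ g x := by
        rw [hgdef]; simp only
        have hnn : ∀ I ∈ Λ, 0 ≤ Set.indicator (S I) (fun y => (wInt w I)⁻¹ * w y) x :=
          fun I hI => Set.indicator_nonneg
            (fun y _ => mul_nonneg (inv_nonneg.mpr (le_of_lt (hpos I (hΛ I hI)))) (hw y)) x
        have := Finset.single_le_sum hnn hselΛ
        rwa [Set.indicator_of_mem ((hSiff x hx _ hselΛ).mpr rfl)] at this
      calc ∑ I ∈ Λ, Set.indicator (dyadicI I.1 I.2) (fun y => (v I)⁻¹ * w y) x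
          = (∑ I ∈ F, (v I)⁻¹) * w x := hsum
        _ ≤ (C * (wInt w (sel x))⁻¹) * w x := mul_le_mul_of_nonneg_right hDR (hw x)
        _ = C * ((wInt w (sel x))⁻¹ * w x) := by ring
        _ ≤ C * g x := mul_le_mul_of_nonneg_left hg_ge (le_of_lt hC)
    calc ∑ I ∈ Λ, wInt w I / v I
        = ∫ x in E, ∑ I ∈ Λ, Set.indicator (dyadicI I.1 I.2) (fun y => (v I)⁻¹ * w y) x := lhs_eq
      _ ≤ ∫ x in E, C * g x := hmono
      _ = C * ∫ x in E, g x := integral_const_mul C g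
      _ = C * ∫ x in E, (wInt w (sel x))⁻¹ * w x := by
          rw [setIntegral_congr_fun hEmeas (fun x hx => hgeq x hx)]
  have hA : 0 ≤ ∑ I ∈ Λ, wInt w I / v I := Finset.sum_nonneg fun I hI =>
    div_nonneg (le_of_lt (hpos I (hΛ I hI))) (le_of_lt (hv I (hΛ I hI)))
  have hB : 0 ≤ ∫ x in E, (wInt w (sel x))⁻¹ * w x := setIntegral_nonneg hEmeas fun x hx =>
    mul_nonneg (inv_nonneg.mpr (le_of_lt (hpos _ (hΛ _ (hsel x hx).1)))) (hw x)
  have hp0 : (0:ℝ) ≤ 1 / p := by positivity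
  have := Real.rpow_le_rpow hA key hp0
  rwa [Real.mul_rpow (le_of_lt hC) hB] at this
end

section
/- Let Λ be a finite family of dyadic intervals, E = ∪_{I∈Λ} I, and for x ∈ E let I(x) be the minimal interval of Λ containing x. If ω is a weight and (v_I)_{I∈𝒟} positive reals such that ∑_{I∈𝒟, J⊆I} ω(I)^{−2/p} ≤ C·v_J^{−2/p} for all dyadic J (where 1 < p < ∞), then for every x ∈ E, ∑_{I∈Λ} ω(I)^{−2/p} χ_I(x) ≤ C·v_{I(x)}^{−2/p}, and consequently (∫_E (∑_{I∈Λ} ω(I)^{−2/p} χ_I(x))^{p/2} ω(x) dx)^{1/p} ≤ C^{1/2}·(∑_{I∈Λ} ω(I)/v_I)^{1/p}. -/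
open MeasureTheory Set

lemma dyadicI_lt (n k : ℕ) : ((k:ℝ)/2^n) < ((k:ℝ)+1)/2^n := by
  have h2 : (0:ℝ) < 2^n := by positivity
  exact div_lt_div_of_pos_right (by linarith) h2

lemma mem_ancestors_bound {I J : ℕ × ℕ} (h : I ∈ ancestors J) : I.1 ≤ J.1 ∧ I.2 < 2 ^ J.1 := by
  obtain ⟨hdy, hsub⟩ := h
  rw [dyadicI, dyadicI, Set.Ico_subset_Ico_iff (dyadicI_lt _ _)] at hsub
  obtain ⟨h1, h2⟩ := hsub
  have hI2 : (0:ℝ) < 2 ^ I.1 := by positivity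
  have hJ2 : (0:ℝ) < 2 ^ J.1 := by positivity
  have hlen : (1:ℝ)/2^J.1 ≤ 1/2^I.1 := by
    have := sub_le_sub h2 h1
    rw [div_sub_div_same, div_sub_div_same] at this
    simpa using this
  have hle : (2:ℝ)^I.1 ≤ 2^J.1 := by
    rw [div_le_div_iff₀ hJ2 hI2] at hlen; linarith
  have h1le : I.1 ≤ J.1 :=
    (pow_le_pow_iff_right₀ (a := (2:ℝ)) (by norm_num)).mp hle
  refine ⟨h1le, lt_of_lt_of_le hdy ?_⟩
  exact pow_le_pow_right₀ (by norm_num) h1le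

theorem stmt2 (w : ℝ → ℝ) (v : ℕ × ℕ → ℝ) (C p : ℝ) (hC : 0 < C) (hp : 1 < p)
    (hw : ∀ x, 0 ≤ w x) (hv : ∀ I, IsDyadic I → 0 < v I)
    (hpos : ∀ I, IsDyadic I → 0 < wInt w I)
    (hDRCC : ∀ J, IsDyadic J →
      ∑' I : ancestors J, (wInt w I.1) ^ (-(2 / p)) ≤ C * (v J) ^ (-(2 / p)))
    (Λ : Finset (ℕ × ℕ)) (hΛ : ∀ I ∈ Λ, IsDyadic I)
    (sel : ℝ → ℕ × ℕ)
    (hsel : ∀ x ∈ ⋃ I ∈ Λ, dyadicI I.1 I.2,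
      sel x ∈ Λ ∧ x ∈ dyadicI (sel x).1 (sel x).2 ∧
        ∀ J ∈ Λ, x ∈ dyadicI J.1 J.2 → dyadicI (sel x).1 (sel x).2 ⊆ dyadicI J.1 J.2) :
    (∀ x ∈ ⋃ I ∈ Λ, dyadicI I.1 I.2,
      (∑ I ∈ Λ, Set.indicator (dyadicI I.1 I.2) (fun _ => (wInt w I) ^ (-(2 / p))) x)
        ≤ C * (v (sel x)) ^ (-(2 / p))) ∧
    (∫ x in ⋃ I ∈ Λ, dyadicI I.1 I.2,
        (∑ I ∈ Λ, Set.indicator (dyadicI I.1 I.2) (fun _ => (wInt w I) ^ (-(2 / p))) x) ^ (p / 2)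
          * w x) ^ (1 / p)
      ≤ C ^ ((1 : ℝ) / 2) * (∑ I ∈ Λ, wInt w I / v I) ^ (1 / p) := by
  have key : ∀ x ∈ ⋃ I ∈ Λ, dyadicI I.1 I.2,
      (∑ I ∈ Λ, Set.indicator (dyadicI I.1 I.2) (fun _ => (wInt w I) ^ (-(2 / p))) x)
        ≤ C * (v (sel x)) ^ (-(2 / p)) := by
    intro x hx
    obtain ⟨hselΛ, hxsel, hmin⟩ := hsel x hx
    set J := sel x with hJ
    have hJdy : IsDyadic J := hΛ _ hselΛ
    set g : ℕ × ℕ → ℝ := (ancestors J).indicator (fun I => (wInt w I) ^ (-(2 / p))) with hg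
    have hganc : ∀ I ∈ ancestors J, g I = (wInt w I) ^ (-(2 / p)) := fun I hI =>
      Set.indicator_of_mem hI _
    have hgnn : ∀ I, 0 ≤ g I := by
      intro I
      apply Set.indicator_nonneg
      intro I' hI'
      exact Real.rpow_nonneg (hpos I' hI'.1).le _
    have hgsum : Summable g := by
      apply summable_of_ne_finset_zero (s := (Finset.range (J.1+1)) ×ˢ Finset.range (2^J.1))
      intro I hI
      apply Set.indicator_of_notMem
      intro hmem
      obtain ⟨h1, h2⟩ := mem_ancestors_bound hmem
      exact hI (Finset.mem_product.2 ⟨Finset.mem_range.2 (Nat.lt_succ_of_le h1),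
        Finset.mem_range.2 h2⟩)
    calc ∑ I ∈ Λ, Set.indicator (dyadicI I.1 I.2) (fun _ => (wInt w I) ^ (-(2 / p))) x
        ≤ ∑ I ∈ Λ, g I := by
          apply Finset.sum_le_sum
          intro I hI
          by_cases hxI : x ∈ dyadicI I.1 I.2
          · rw [Set.indicator_of_mem hxI]
            rw [hganc I ⟨hΛ I hI, hmin I hI hxI⟩]
          · rw [Set.indicator_of_notMem hxI]; exact hgnn I
      _ ≤ ∑' I, g I := Summable.sum_le_tsum Λ (fun I _ => hgnn I) hgsum
      _ = ∑' I : ancestors J, (wInt w I.1) ^ (-(2 / p)) := (tsum_subtype _ _).symm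
      _ ≤ C * (v J) ^ (-(2 / p)) := hDRCC J hJdy
  refine ⟨key, ?_⟩
  have hp0 : (0:ℝ) < p := by linarith
  set E := ⋃ I ∈ Λ, dyadicI I.1 I.2 with hEdef
  have hImeas : ∀ n k : ℕ, MeasurableSet (dyadicI n k) := fun n k => measurableSet_Ico
  have hE : MeasurableSet E := by
    exact MeasurableSet.biUnion Λ.countable_toSet (fun I _ => hImeas I.1 I.2)
  have hwI : ∀ I ∈ Λ, IntegrableOn w (dyadicI I.1 I.2) := by
    intro I hI
    by_contra hni
    have := hpos I (hΛ I hI)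
    rw [wInt, integral_undef hni] at this
    exact lt_irrefl _ this
  have hwE : IntegrableOn w E := by
    rw [hEdef, integrableOn_finset_iUnion]
    exact hwI
  -- the dominating function
  set g : ℝ → ℝ := fun x => ∑ I ∈ Λ, Set.indicator (dyadicI I.1 I.2) (fun _ => (v I)⁻¹) x
    with hgdef
  have hgmeas : Measurable g := by
    apply Finset.measurable_sum
    intro I _
    exact (measurable_const.indicator (hImeas I.1 I.2))
  have hgbdd : ∃ B, ∀ x, ‖g x‖ ≤ B := by
    refine ⟨∑ I ∈ Λ, |(v I)⁻¹|, fun x => ?_⟩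
    rw [hgdef]
    refine (Finset.abs_sum_le_sum_abs _ _).trans (Finset.sum_le_sum fun I _ => ?_)
    rw [abs_le]
    constructor
    · rcases Set.indicator_eq_zero_or_self (dyadicI I.1 I.2) (fun _ => (v I)⁻¹) x with h | h <;>
        rw [h] <;> simp [abs_nonneg, neg_abs_le, -abs_inv]
    · rcases Set.indicator_eq_zero_or_self (dyadicI I.1 I.2) (fun _ => (v I)⁻¹) x with h | h <;>
        rw [h] <;> simp [abs_nonneg, le_abs_self, -abs_inv]
  have hh_int : IntegrableOn (fun x => C ^ (p/2) * g x * w x) E := by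
    have : IntegrableOn (fun x => (C ^ (p/2) * g x) * w x) E := by
      obtain ⟨B, hB⟩ := hgbdd
      exact hwE.bdd_mul ((measurable_const.mul hgmeas).aestronglyMeasurable)
        (c := |C ^ (p/2)| * B) (ae_of_all _ fun x => by
              rw [norm_mul]
              exact mul_le_mul_of_nonneg_left (hB x) (abs_nonneg _))
    exact this
  -- pointwise bound
  have hfh : ∀ x ∈ E, (∑ I ∈ Λ, Set.indicator (dyadicI I.1 I.2)
      (fun _ => (wInt w I) ^ (-(2 / p))) x) ^ (p / 2) * w x ≤ C ^ (p/2) * g x * w x := by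
    intro x hx
    obtain ⟨hselΛ, hxsel, _⟩ := hsel x hx
    have hvsel : 0 < v (sel x) := hv _ (hΛ _ hselΛ)
    have hsumnn : 0 ≤ ∑ I ∈ Λ, Set.indicator (dyadicI I.1 I.2)
        (fun _ => (wInt w I) ^ (-(2 / p))) x := by
      apply Finset.sum_nonneg
      intro I hI
      exact Set.indicator_nonneg (fun _ _ => Real.rpow_nonneg (hpos I (hΛ I hI)).le _) x
    have step1 : (∑ I ∈ Λ, Set.indicator (dyadicI I.1 I.2)
        (fun _ => (wInt w I) ^ (-(2 / p))) x) ^ (p / 2)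
        ≤ (C * (v (sel x)) ^ (-(2 / p))) ^ (p / 2) :=
      Real.rpow_le_rpow hsumnn (key x hx) (by positivity)
    have step2 : (C * (v (sel x)) ^ (-(2 / p))) ^ (p / 2) = C ^ (p/2) * (v (sel x))⁻¹ := by
      rw [Real.mul_rpow hC.le (Real.rpow_nonneg hvsel.le _), ← Real.rpow_mul hvsel.le]
      have hexp : -(2/p) * (p/2) = -1 := by field_simp
      rw [hexp, Real.rpow_neg_one]
    have step3 : (v (sel x))⁻¹ ≤ g x := by
      have h := Finset.single_le_sum (f := fun I => Set.indicator (dyadicI I.1 I.2)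
        (fun _ => (v I)⁻¹) x) (fun I hI => Set.indicator_nonneg
        (fun _ _ => inv_nonneg.2 (hv I (hΛ I hI)).le) x) hselΛ
      simp only [Set.indicator_of_mem hxsel] at h
      exact h
    calc (∑ I ∈ Λ, Set.indicator (dyadicI I.1 I.2)
          (fun _ => (wInt w I) ^ (-(2 / p))) x) ^ (p / 2) * w x
        ≤ (C ^ (p/2) * (v (sel x))⁻¹) * w x := by
          apply mul_le_mul_of_nonneg_right _ (hw x)
          rw [← step2]; exact step1
      _ ≤ C ^ (p/2) * g x * w x :=
          mul_le_mul_of_nonneg_right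
            (mul_le_mul_of_nonneg_left step3 (by positivity)) (hw x)
  -- nonnegativity of the integrand
  have hsumnn : ∀ x, 0 ≤ ∑ I ∈ Λ, Set.indicator (dyadicI I.1 I.2)
      (fun _ => (wInt w I) ^ (-(2 / p))) x := fun x =>
    Finset.sum_nonneg fun I hI =>
      Set.indicator_nonneg (fun _ _ => Real.rpow_nonneg (hpos I (hΛ I hI)).le _) x
  have hfnn : ∀ x, 0 ≤ (∑ I ∈ Λ, Set.indicator (dyadicI I.1 I.2)
      (fun _ => (wInt w I) ^ (-(2 / p))) x) ^ (p / 2) * w x := fun x =>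
    mul_nonneg (Real.rpow_nonneg (hsumnn x) _) (hw x)
  -- integral comparison
  have h1 : (∫ x in E, (∑ I ∈ Λ, Set.indicator (dyadicI I.1 I.2)
      (fun _ => (wInt w I) ^ (-(2 / p))) x) ^ (p / 2) * w x)
      ≤ ∫ x in E, C ^ (p/2) * g x * w x := by
    apply integral_mono_of_nonneg (ae_of_all _ hfnn) hh_int
    exact (ae_restrict_iff' hE).2 (ae_of_all _ hfh)
  -- per-term integrability
  have hterm_int : ∀ I ∈ Λ, IntegrableOn (fun x =>
      Set.indicator (dyadicI I.1 I.2) (fun _ => (v I)⁻¹) x * w x) E := by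
    intro I hI
    refine hwE.bdd_mul ((measurable_const.indicator (hImeas I.1 I.2)).aestronglyMeasurable)
      (c := ‖(v I)⁻¹‖) (ae_of_all _ fun x => ?_)
    exact norm_indicator_le_norm_self (fun _ => (v I)⁻¹) x
  -- compute the dominating integral
  have h2 : (∫ x in E, C ^ (p/2) * g x * w x)
      = C ^ (p/2) * ∑ I ∈ Λ, ∫ x in E,
          Set.indicator (dyadicI I.1 I.2) (fun _ => (v I)⁻¹) x * w x := by
    simp only [mul_assoc]
    rw [integral_const_mul _ _]
    congr 1
    rw [← integral_finset_sum Λ hterm_int]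
    congr 1
    funext x
    rw [hgdef, Finset.sum_mul]
  have h3 : ∀ I ∈ Λ, (∫ x in E,
      Set.indicator (dyadicI I.1 I.2) (fun _ => (v I)⁻¹) x * w x) ≤ (v I)⁻¹ * wInt w I := by
    intro I hI
    have heq : (fun x => Set.indicator (dyadicI I.1 I.2) (fun _ => (v I)⁻¹) x * w x)
        = fun x => Set.indicator (dyadicI I.1 I.2) (fun y => (v I)⁻¹ * w y) x := by
      funext x
      by_cases hxI : x ∈ dyadicI I.1 I.2
      · simp [Set.indicator_of_mem hxI]
      · simp [Set.indicator_of_notMem hxI]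
    rw [heq, setIntegral_indicator (hImeas I.1 I.2), integral_const_mul _ _]
    apply mul_le_mul_of_nonneg_left _ (inv_nonneg.2 (hv I (hΛ I hI)).le)
    exact setIntegral_mono_set (hwI I hI) (ae_of_all _ hw)
      (HasSubset.Subset.eventuallyLE Set.inter_subset_right)
  have hS : (0:ℝ) ≤ ∑ I ∈ Λ, wInt w I / v I :=
    Finset.sum_nonneg fun I hI => div_nonneg (hpos I (hΛ I hI)).le (hv I (hΛ I hI)).le
  have h4 : (∫ x in E, (∑ I ∈ Λ, Set.indicator (dyadicI I.1 I.2)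
      (fun _ => (wInt w I) ^ (-(2 / p))) x) ^ (p / 2) * w x)
      ≤ C ^ (p/2) * ∑ I ∈ Λ, wInt w I / v I := by
    refine h1.trans ?_
    rw [h2]
    refine mul_le_mul_of_nonneg_left ?_ (by positivity)
    refine (Finset.sum_le_sum h3).trans_eq ?_
    exact Finset.sum_congr rfl fun I _ => by rw [div_eq_inv_mul]
  have hint_nn : (0:ℝ) ≤ ∫ x in E, (∑ I ∈ Λ, Set.indicator (dyadicI I.1 I.2)
      (fun _ => (wInt w I) ^ (-(2 / p))) x) ^ (p / 2) * w x :=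
    integral_nonneg hfnn
  calc (∫ x in E, (∑ I ∈ Λ, Set.indicator (dyadicI I.1 I.2)
        (fun _ => (wInt w I) ^ (-(2 / p))) x) ^ (p / 2) * w x) ^ (1 / p)
      ≤ (C ^ (p/2) * ∑ I ∈ Λ, wInt w I / v I) ^ (1 / p) :=
        Real.rpow_le_rpow hint_nn h4 (by positivity)
    _ = C ^ ((1:ℝ)/2) * (∑ I ∈ Λ, wInt w I / v I) ^ (1 / p) := by
        rw [Real.mul_rpow (by positivity) hS, ← Real.rpow_mul hC.le]
        congr 2
        field_simp
end

section
/- Let X be a Banach space with normalized Schauder basis (eₙ) with biorthogonal functionals (eₙ*). Suppose there is a constant D > 0 such that ‖x − G(x)‖ ≤ D·𝒟*_m(x) for every x ∈ X, m ∈ ℕ, and every greedy projection G(x) = P_A(x) onto a greedy set A of cardinality m (i.e., min_{n∈A}|eₙ*(x)| ≥ max_{n∉A}|eₙ*(x)|), where 𝒟*_m(x) = inf{ ‖x − α·1_{ηB}‖ : α ∈ ℝ, |B| = m, η ∈ {±1}^B }. Then for every x ∈ X and every finite set C of indices, ‖x − P_C(x)‖ ≤ D·‖x‖, i.e., the basis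 is suppression unconditional with constant D. -/
open Finset

theorem stmt5 {X : Type*} [NormedAddCommGroup X] [NormedSpace ℝ X] [CompleteSpace X]
    (e : ℕ → X) (e' : ℕ → X →L[ℝ] ℝ)
    (hnorm : ∀ n, ‖e n‖ = 1)
    (hbi : ∀ n m, e' n (e m) = if n = m then 1 else 0)
    (hbasis : ∀ x : X,
      Filter.Tendsto (fun N => ∑ n ∈ Finset.range N, e' n x • e n) Filter.atTop (nhds x))
    (D : ℝ) (hD : 0 < D)
    -- the PCCG hypothesis: the error of any greedy projection is bounded by `D` times
    -- any competitor `α • 1_{ηB}` with `|B| = |A|`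
    (hyp : ∀ (x : X) (A : Finset ℕ),
      (∀ a ∈ A, ∀ b ∉ A, |e' b x| ≤ |e' a x|) →
      ∀ (α : ℝ) (B : Finset ℕ) (η : ℕ → ℝ), B.card = A.card →
        (∀ n ∈ B, η n = 1 ∨ η n = -1) →
        ‖x - ∑ n ∈ A, e' n x • e n‖ ≤ D * ‖x - α • ∑ n ∈ B, η n • e n‖) :
    -- suppression unconditionality with constant `D`
    ∀ (x : X) (C : Finset ℕ), ‖x - ∑ n ∈ C, e' n x • e n‖ ≤ D * ‖x‖ := by
  intro x C
  -- the terms of the convergent series tend to 0, hence coefficients are bounded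
  have hterm : Filter.Tendsto (fun n => e' n x • e n) Filter.atTop (nhds 0) := by
    have h1 := ((hbasis x).comp (Filter.tendsto_add_atTop_nat 1)).sub (hbasis x)
    simp only [Function.comp, Finset.sum_range_succ, sub_self] at h1
    simpa using h1
  have habs : Filter.Tendsto (fun n => |e' n x|) Filter.atTop (nhds 0) := by
    have := hterm.norm
    simp only [norm_smul, hnorm, mul_one, norm_zero, Real.norm_eq_abs] at this
    exact this
  obtain ⟨M, hM⟩ : ∃ M, ∀ n, |e' n x| ≤ M := by
    obtain ⟨M, hM⟩ := habs.bddAbove_range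
    exact ⟨M, fun n => hM ⟨n, rfl⟩⟩
  have hM0 : 0 ≤ M := le_trans (abs_nonneg _) (hM 0)
  set μ : ℝ := 2 * M + 1 with hμ
  set y : X := x + μ • ∑ n ∈ C, e n with hy
  have hcoef : ∀ n, e' n y = e' n x + μ * (if n ∈ C then 1 else 0) := by
    intro n
    simp only [hy, map_add, map_smul, map_sum, hbi, smul_eq_mul]
    congr 1
    rw [Finset.sum_ite_eq C n (fun _ => (1:ℝ))]
  have hgreedy : ∀ a ∈ C, ∀ b ∉ C, |e' b y| ≤ |e' a y| := by
    intro a ha b hb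
    rw [hcoef a, hcoef b, if_pos ha, if_neg hb]
    have h1 : |e' b x| ≤ M := hM b
    have h2 : μ - |e' a x| ≤ |e' a x + μ * 1| := by
      have := abs_add_le (e' a x) (μ * 1)
      have h3 : |μ * 1| ≤ |e' a x| + |e' a x + μ * 1| := by
        calc |μ * 1| = |e' a x + μ * 1 + (- e' a x)| := by ring_nf
          _ ≤ |e' a x + μ * 1| + |(- e' a x)| := abs_add_le _ _
          _ = |e' a x| + |e' a x + μ * 1| := by rw [abs_neg]; ring
      have : |μ * 1| = μ := by
        rw [mul_one, abs_of_nonneg]; positivity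
      linarith [h3, this ▸ h3]
    have h4 : M ≤ μ - M := by simp [hμ]; linarith
    simp only [mul_zero, add_zero]
    linarith [hM a]
  have key := hyp y C hgreedy μ C (fun _ => 1) rfl (fun _ _ => Or.inl rfl)
  have hrhs : y - μ • ∑ n ∈ C, (1:ℝ) • e n = x := by
    simp [hy, one_smul]
  have hlhs : y - ∑ n ∈ C, e' n y • e n = x - ∑ n ∈ C, e' n x • e n := by
    have : ∑ n ∈ C, e' n y • e n
        = ∑ n ∈ C, e' n x • e n + μ • ∑ n ∈ C, e n := by
      rw [Finset.smul_sum, ← Finset.sum_add_distrib]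
      refine Finset.sum_congr rfl fun n hn => ?_
      rw [hcoef n, if_pos hn, mul_one, add_smul]
    rw [this, hy]
    abel
  rw [hlhs, hrhs] at key
  exact key
end

section
/- Let X be a Banach space with normalized Schauder basis ℬ and let ω = (ωₙ) be a weight sequence of positive reals. If ℬ is (s,ω)-greedy for polynomials with constant coefficients for some 0 < s ≤ 1 (i.e., there is D(s) > 0 with ‖x − Gˢ(x)‖ ≤ D(s)·𝒟^ω_{ω(A)}(x) for every x, every s-greedy set A of x, and Gˢ(x) = P_A(x)), then ℬ is (t,ω)-greedy for every 0 < t ≤ 1: there is C(t) > 0 such that ‖x − Gᵗ(x)‖ ≤ C(t)·σ^ω_{ω(A)}(x) for every x ∈ X, every t-greedy set A of x, and Gᵗ(x) = P_A(x). Moreover, for t ≥ s one may take C(t) = D(s)², and for t < s one may take C(t) = (2 + ((t+s)/t)·D(s))·D(s). -/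
open Finset Filter

section Aux

variable {X : Type*} [NormedAddCommGroup X] [NormedSpace ℝ X]

lemma coef_sum (e : ℕ → X) (e' : ℕ → X →L[ℝ] ℝ)
    (hbi : ∀ n m, e' n (e m) = if n = m then 1 else 0)
    (F : Finset ℕ) (c : ℕ → ℝ) (k : ℕ) :
    e' k (∑ n ∈ F, c n • e n) = if k ∈ F then c k else 0 := by
  rw [map_sum]
  by_cases hk : k ∈ F
  · rw [if_pos hk, Finset.sum_eq_single k (fun b _ hbk => by
      have : k ≠ b := Ne.symm hbk
      simp [hbi, this]) (fun h => absurd hk h)]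
    simp [hbi]
  · rw [if_neg hk, Finset.sum_eq_zero]
    intro b hb
    have hkb : k ≠ b := fun h => hk (h ▸ hb)
    simp [hbi, hkb]

lemma convex_bound (e : ℕ → X) (lo hi : ℕ → ℝ) (C : ℝ) (f : ℕ → ℝ) :
    ∀ (Γ : Finset ℕ) (y : X),
      (∀ n ∈ Γ, ∃ θ : ℝ, 0 ≤ θ ∧ θ ≤ 1 ∧ f n = θ * lo n + (1 - θ) * hi n) →
      (∀ g : ℕ → ℝ, (∀ n ∈ Γ, g n = lo n ∨ g n = hi n) →
        ‖y + ∑ n ∈ Γ, g n • e n‖ ≤ C) →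
      ‖y + ∑ n ∈ Γ, f n • e n‖ ≤ C := by
  classical
  intro Γ
  induction Γ using Finset.induction_on with
  | empty =>
    intro y _ h
    simpa using h (fun _ => 0) (fun n hn => absurd hn (Finset.notMem_empty n))
  | @insert a Γ' ha ih =>
    intro y hf h
    obtain ⟨θ, hθ0, hθ1, hfa⟩ := hf a (Finset.mem_insert_self a Γ')
    have hvert : ∀ w : ℝ, (w = lo a ∨ w = hi a) →
        ‖(y + w • e a) + ∑ n ∈ Γ', f n • e n‖ ≤ C := by
      intro w hw
      refine ih (y + w • e a) (fun n hn => hf n (Finset.mem_insert_of_mem hn)) ?_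
      intro g hg
      have hcond : ∀ n ∈ insert a Γ', Function.update g a w n = lo n ∨
          Function.update g a w n = hi n := by
        intro n hn
        rcases Finset.mem_insert.mp hn with h' | h'
        · subst h'; rw [Function.update_self]; exact hw
        · have hna : n ≠ a := by rintro rfl; exact ha h'
          rw [Function.update_of_ne hna]
          exact hg n h'
      have hgoal := h (Function.update g a w) hcond
      rw [Finset.sum_insert ha, Function.update_self] at hgoal
      have heq : ∑ n ∈ Γ', Function.update g a w n • e n = ∑ n ∈ Γ', g n • e n :=
        Finset.sum_congr rfl (fun n hn => by
          have hna : n ≠ a := by rintro rfl; exact ha hn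
          rw [Function.update_of_ne hna])
      rw [heq, ← add_assoc] at hgoal
      exact hgoal
    have hkey : y + ∑ n ∈ insert a Γ', f n • e n
        = θ • ((y + lo a • e a) + ∑ n ∈ Γ', f n • e n)
          + (1 - θ) • ((y + hi a • e a) + ∑ n ∈ Γ', f n • e n) := by
      rw [Finset.sum_insert ha, hfa]
      module
    rw [hkey]
    have h1 := hvert (lo a) (Or.inl rfl)
    have h2 := hvert (hi a) (Or.inr rfl)
    calc ‖θ • ((y + lo a • e a) + ∑ n ∈ Γ', f n • e n)
          + (1 - θ) • ((y + hi a • e a) + ∑ n ∈ Γ', f n • e n)‖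
        ≤ ‖θ • ((y + lo a • e a) + ∑ n ∈ Γ', f n • e n)‖
          + ‖(1 - θ) • ((y + hi a • e a) + ∑ n ∈ Γ', f n • e n)‖ := norm_add_le _ _
      _ = θ * ‖(y + lo a • e a) + ∑ n ∈ Γ', f n • e n‖
          + (1 - θ) * ‖(y + hi a • e a) + ∑ n ∈ Γ', f n • e n‖ := by
          rw [norm_smul, norm_smul, Real.norm_eq_abs, Real.norm_eq_abs,
            abs_of_nonneg hθ0, abs_of_nonneg (by linarith)]
      _ ≤ θ * C + (1 - θ) * C :=
          add_le_add (mul_le_mul_of_nonneg_left h1 hθ0)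
            (mul_le_mul_of_nonneg_left h2 (by linarith))
      _ = C := by ring

lemma exists_coef_bound (e : ℕ → X) (e' : ℕ → X →L[ℝ] ℝ)
    (hnorm : ∀ n, ‖e n‖ = 1)
    (hbasis : ∀ x : X, Filter.Tendsto (fun N => ∑ n ∈ Finset.range N, e' n x • e n)
      Filter.atTop (nhds x)) (w : X) :
    ∃ M : ℝ, 0 ≤ M ∧ ∀ n, |e' n w| ≤ M := by
  have h1 : Filter.Tendsto
      (fun n => ‖(∑ k ∈ Finset.range (n+1), e' k w • e k) - ∑ k ∈ Finset.range n, e' k w • e k‖)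
      Filter.atTop (nhds 0) := by
    have h2 := (((hbasis w).comp (tendsto_add_atTop_nat 1)).sub (hbasis w)).norm
    simpa using h2
  have h3 : Filter.Tendsto (fun n => |e' n w|) Filter.atTop (nhds 0) := by
    have heq : (fun n => |e' n w|) = fun n =>
        ‖(∑ k ∈ Finset.range (n+1), e' k w • e k) - ∑ k ∈ Finset.range n, e' k w • e k‖ := by
      funext n
      rw [Finset.sum_range_succ, add_sub_cancel_left, norm_smul, hnorm, mul_one,
        Real.norm_eq_abs]
    rw [heq]
    exact h1
  obtain ⟨N, hN⟩ := Filter.eventually_atTop.mp (h3.eventually_lt_const one_pos)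
  refine ⟨1 + ∑ k ∈ Finset.range N, |e' k w|, by positivity, fun n => ?_⟩
  by_cases hn : n < N
  · have h4 : |e' n w| ≤ ∑ k ∈ Finset.range N, |e' k w| :=
      Finset.single_le_sum (f := fun k => |e' k w|) (fun i _ => abs_nonneg _) (Finset.mem_range.mpr hn)
    linarith
  · have h5 := hN n (le_of_not_gt hn)
    have h6 : (0:ℝ) ≤ ∑ k ∈ Finset.range N, |e' k w| :=
      Finset.sum_nonneg (fun i _ => abs_nonneg _)
    linarith


lemma proj_err_bound (e : ℕ → X) (e' : ℕ → X →L[ℝ] ℝ)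
    (hnorm : ∀ n, ‖e n‖ = 1)
    (hbi : ∀ n m, e' n (e m) = if n = m then 1 else 0)
    (hbasis : ∀ x : X, Filter.Tendsto (fun N => ∑ n ∈ Finset.range N, e' n x • e n)
      Filter.atTop (nhds x))
    (ω : ℕ → ℝ) (s D : ℝ) (hs0 : 0 < s) (hs1 : s ≤ 1)
    (hyp : ∀ (x : X) (A : Finset ℕ),
      (∀ a ∈ A, ∀ b ∉ A, s * |e' b x| ≤ |e' a x|) →
      ∀ (α : ℝ) (B : Finset ℕ) (η : ℕ → ℝ),
        (∑ n ∈ B, ω n) ≤ (∑ n ∈ A, ω n) → (∀ n ∈ B, η n = 1 ∨ η n = -1) →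
        ‖x - ∑ n ∈ A, e' n x • e n‖ ≤ D * ‖x - α • ∑ n ∈ B, η n • e n‖)
    (w : X) (G : Finset ℕ) (c' : ℕ → ℝ) :
    ‖w - ∑ n ∈ G, e' n w • e n‖ ≤
      D * ‖(w - ∑ n ∈ G, e' n w • e n) + ∑ n ∈ G, c' n • e n‖ := by
  classical
  obtain ⟨M, hM0, hM⟩ := exists_coef_bound e e' hnorm hbasis w
  set α : ℝ := s * M + 1 + ∑ n ∈ G, |c' n| with hα
  set v : X := (w - ∑ n ∈ G, e' n w • e n) + ∑ n ∈ G, (c' n + α) • e n with hv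
  have hcoefv : ∀ k, e' k v = if k ∈ G then c' k + α else e' k w := by
    intro k
    rw [hv]
    simp only [map_add, map_sub, coef_sum e e' hbi]
    by_cases hk : k ∈ G <;> simp [hk]
  have hgreedy : ∀ a ∈ G, ∀ b ∉ G, s * |e' b v| ≤ |e' a v| := by
    intro a ha b hb
    rw [hcoefv a, if_pos ha, hcoefv b, if_neg hb]
    have h1 : s * |e' b w| ≤ s * M := mul_le_mul_of_nonneg_left (hM b) hs0.le
    have h2 : |c' a| ≤ ∑ n ∈ G, |c' n| :=
      Finset.single_le_sum (f := fun n => |c' n|) (fun i _ => abs_nonneg _) ha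
    have h3 : s * M + 1 ≤ c' a + α := by
      have := neg_abs_le (c' a)
      rw [hα]; linarith
    calc s * |e' b w| ≤ s * M + 1 := by linarith
      _ ≤ c' a + α := h3
      _ ≤ |c' a + α| := le_abs_self _
  have happ := hyp v G hgreedy α G (fun _ => 1) (le_refl _) (fun n _ => Or.inl rfl)
  have hPv : ∑ n ∈ G, e' n v • e n = ∑ n ∈ G, (c' n + α) • e n :=
    Finset.sum_congr rfl (fun n hn => by rw [hcoefv n, if_pos hn])
  have hL : v - ∑ n ∈ G, e' n v • e n = w - ∑ n ∈ G, e' n w • e n := by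
    rw [hPv, hv]; abel
  have hR : v - α • ∑ n ∈ G, (fun _ => (1:ℝ)) n • e n
      = (w - ∑ n ∈ G, e' n w • e n) + ∑ n ∈ G, c' n • e n := by
    rw [hv, Finset.smul_sum]
    have h4 : ∀ n ∈ G, (c' n + α) • e n - α • ((1:ℝ) • e n) = c' n • e n := by
      intro n _
      rw [one_smul, ← sub_smul, add_sub_cancel_right]
    rw [add_sub_assoc, ← Finset.sum_sub_distrib, Finset.sum_congr rfl h4]
  rw [hL, hR] at happ
  exact happ

lemma proj_norm_bound (e : ℕ → X) (e' : ℕ → X →L[ℝ] ℝ)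
    (hnorm : ∀ n, ‖e n‖ = 1)
    (hbi : ∀ n m, e' n (e m) = if n = m then 1 else 0)
    (hbasis : ∀ x : X, Filter.Tendsto (fun N => ∑ n ∈ Finset.range N, e' n x • e n)
      Filter.atTop (nhds x))
    (ω : ℕ → ℝ) (s D : ℝ) (hs0 : 0 < s) (hs1 : s ≤ 1) (hD : 0 < D)
    (hyp : ∀ (x : X) (A : Finset ℕ),
      (∀ a ∈ A, ∀ b ∉ A, s * |e' b x| ≤ |e' a x|) →
      ∀ (α : ℝ) (B : Finset ℕ) (η : ℕ → ℝ),
        (∑ n ∈ B, ω n) ≤ (∑ n ∈ A, ω n) → (∀ n ∈ B, η n = 1 ∨ η n = -1) →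
        ‖x - ∑ n ∈ A, e' n x • e n‖ ≤ D * ‖x - α • ∑ n ∈ B, η n • e n‖)
    (p : X) (S : Finset ℕ) :
    ‖∑ n ∈ S, e' n p • e n‖ ≤ D * ‖p‖ := by
  classical
  have hev : ∀ᶠ N in Filter.atTop, ‖∑ n ∈ S, e' n p • e n‖
      ≤ D * ‖p‖ + ‖p - ∑ n ∈ Finset.range N, e' n p • e n‖ := by
    filter_upwards [Filter.eventually_ge_atTop (S.sup id + 1)] with N hN
    have hSN : S ⊆ Finset.range N := by
      intro n hn
      have h := Finset.le_sup (f := id) hn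
      simp only [id] at h
      exact Finset.mem_range.mpr (by omega)
    have hsplit : ∑ n ∈ S, e' n p • e n
        = (p - ∑ n ∈ Finset.range N \ S, e' n p • e n)
          - (p - ∑ n ∈ Finset.range N, e' n p • e n) := by
      rw [← Finset.sum_sdiff hSN]
      abel
    rw [hsplit]
    refine le_trans (norm_sub_le _ _) (add_le_add ?_ (le_refl _))
    have h := proj_err_bound e e' hnorm hbi hbasis ω s D hs0 hs1 hyp p
      (Finset.range N \ S) (fun n => e' n p)
    rwa [sub_add_cancel] at h
  have hlim : Filter.Tendsto
      (fun N => D * ‖p‖ + ‖p - ∑ n ∈ Finset.range N, e' n p • e n‖)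
      Filter.atTop (nhds (D * ‖p‖ + 0)) := by
    refine tendsto_const_nhds.add ?_
    have := (tendsto_const_nhds (x := p) (f := Filter.atTop (α := ℕ))).sub (hbasis p)
    simpa using this.norm
  have := ge_of_tendsto hlim hev
  simpa using this

end Aux
set_option maxHeartbeats 3200000 in
theorem stmt6 {X : Type*} [NormedAddCommGroup X] [NormedSpace ℝ X] [CompleteSpace X]
    (e : ℕ → X) (e' : ℕ → X →L[ℝ] ℝ)
    (hnorm : ∀ n, ‖e n‖ = 1)
    (hbi : ∀ n m, e' n (e m) = if n = m then 1 else 0)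
    (hbasis : ∀ x : X,
      Filter.Tendsto (fun N => ∑ n ∈ Finset.range N, e' n x • e n) Filter.atTop (nhds x))
    (ω : ℕ → ℝ) (hω : ∀ n, 0 < ω n)
    (s D : ℝ) (hs0 : 0 < s) (hs1 : s ≤ 1) (hD : 0 < D)
    -- `(s,ω)`-PCCG property with constant `D`: for every `s`-greedy set `A` of `x`,
    -- the error is bounded by `D` times any competitor `α • 1_{ηB}` with `ω(B) ≤ ω(A)`
    (hyp : ∀ (x : X) (A : Finset ℕ),
      (∀ a ∈ A, ∀ b ∉ A, s * |e' b x| ≤ |e' a x|) →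
      ∀ (α : ℝ) (B : Finset ℕ) (η : ℕ → ℝ),
        (∑ n ∈ B, ω n) ≤ (∑ n ∈ A, ω n) → (∀ n ∈ B, η n = 1 ∨ η n = -1) →
        ‖x - ∑ n ∈ A, e' n x • e n‖ ≤ D * ‖x - α • ∑ n ∈ B, η n • e n‖) :
    -- `(t,ω)`-greedy for every `0 < t ≤ 1`, with constant `D²` if `s ≤ t`
    -- and `(2 + ((t+s)/t)·D)·D` if `t < s`
    ∀ t : ℝ, 0 < t → t ≤ 1 →
      ∀ (x : X) (A : Finset ℕ),
        (∀ a ∈ A, ∀ b ∉ A, t * |e' b x| ≤ |e' a x|) →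
        ∀ (B : Finset ℕ) (c : ℕ → ℝ), (∑ n ∈ B, ω n) ≤ (∑ n ∈ A, ω n) →
          ‖x - ∑ n ∈ A, e' n x • e n‖ ≤
            (if s ≤ t then D ^ 2 else (2 + ((t + s) / t) * D) * D) *
              ‖x - ∑ n ∈ B, c n • e n‖ := by
  classical
  intro t ht0 ht1 x A hA B c hωBA
  obtain ⟨M, hM0, hM⟩ := exists_coef_bound e e' hnorm hbasis x
  obtain ⟨b₀, hb₀⟩ := Infinite.exists_notMem_finset A
  set U : Set ℝ := (fun n => |e' n x|) '' {n : ℕ | n ∉ A} with hU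
  have hUne : U.Nonempty := ⟨|e' b₀ x|, b₀, hb₀, rfl⟩
  have hUbdd : BddAbove U := ⟨M, by rintro r ⟨n, -, rfl⟩; exact hM n⟩
  set u : ℝ := sSup U with hu
  have hub : ∀ b, b ∉ A → |e' b x| ≤ u := fun b hb => le_csSup hUbdd ⟨b, hb, rfl⟩
  have hu0 : 0 ≤ u := le_trans (abs_nonneg _) (hub b₀ hb₀)
  have hAu : ∀ a ∈ A, t * u ≤ |e' a x| := by
    intro a ha
    rw [mul_comm, ← le_div_iff₀ ht0]
    refine csSup_le hUne ?_
    rintro r ⟨b, hb, rfl⟩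
    rw [le_div_iff₀ ht0, mul_comm]
    exact hA a ha b hb
  have hCnn : 0 ≤ (if s ≤ t then D ^ 2 else (2 + ((t + s) / t) * D) * D) := by
    split_ifs
    · positivity
    · have h1 : (0:ℝ) ≤ (t + s) / t := by positivity
      positivity
  set z : X := ∑ n ∈ B, c n • e n with hz
  rcases le_or_gt u 0 with hu' | hu'
  · -- degenerate case : all coefficients outside A vanish, so x = P_A x
    have hzero : ∀ b, b ∉ A → e' b x = 0 := by
      intro b hb
      exact abs_eq_zero.mp (le_antisymm (le_trans (hub b hb) hu') (abs_nonneg _))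
    have hxPA : x = ∑ n ∈ A, e' n x • e n := by
      have h2 : ∀ᶠ N in Filter.atTop,
          (∑ n ∈ Finset.range N, e' n x • e n) = ∑ n ∈ A, e' n x • e n := by
        filter_upwards [Filter.eventually_ge_atTop (A.sup id + 1)] with N hN
        refine (Finset.sum_subset ?_ ?_).symm
        · intro n hn
          have h := Finset.le_sup (f := id) hn
          simp only [id] at h
          exact Finset.mem_range.mpr (by omega)
        · intro n _ hn
          rw [hzero n hn, zero_smul]
      have h3 := (hbasis x).congr' h2
      exact tendsto_nhds_unique h3 tendsto_const_nhds
    rw [← hxPA, sub_self, norm_zero]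
    exact mul_nonneg hCnn (norm_nonneg _)
  -- main case : u > 0
  have hune : u ≠ 0 := ne_of_gt hu'
  set p : X := x - z with hp
  set ε : ℕ → ℝ := fun n => if e' n p < 0 then -1 else 1 with hε
  have hεmul : ∀ n, ε n * |e' n p| = e' n p := by
    intro n
    by_cases h : e' n p < 0
    · simp only [hε, if_pos h, abs_of_neg h]; ring
    · simp only [hε, if_neg h, abs_of_nonneg (not_lt.mp h)]; ring
  have hεabs : ∀ n, |ε n| = 1 := by
    intro n
    by_cases h : e' n p < 0 <;> simp [hε, h]
  set R : X := (x - ∑ n ∈ A ∪ B, e' n x • e n) + ∑ n ∈ A \ B, ((s * u) * ε n) • e n with hR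
  -- Step A : ‖x - P_A x‖ ≤ D ‖R‖
  have stepA : ‖x - ∑ n ∈ A, e' n x • e n‖ ≤ D * ‖R‖ := by
    have hsplit : x - ∑ n ∈ A, e' n x • e n
        = (x - ∑ n ∈ A ∪ B, e' n x • e n) + ∑ n ∈ B \ A, e' n x • e n := by
      have h1 : ∑ n ∈ A ∪ B, e' n x • e n
          = ∑ n ∈ A, e' n x • e n + ∑ n ∈ B \ A, e' n x • e n := by
        rw [← Finset.sum_union Finset.disjoint_sdiff, Finset.union_sdiff_self_eq_union]
      rw [h1]; abel
    rw [hsplit]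
    refine convex_bound e (fun _ => -u) (fun _ => u) (D * ‖R‖) (fun n => e' n x) (B \ A)
      (x - ∑ n ∈ A ∪ B, e' n x • e n) ?_ ?_
    · intro n hn
      have hnA : n ∉ A := (Finset.mem_sdiff.mp hn).2
      have h1 := (abs_le.mp (hub n hnA)).1
      have h2 := (abs_le.mp (hub n hnA)).2
      have hu2 : (0:ℝ) < 2 * u := by linarith
      refine ⟨(u - e' n x) / (2 * u), div_nonneg (by linarith) hu2.le, ?_, ?_⟩
      · rw [div_le_one hu2]; linarith
      · field_simp
        ring
    · intro g hg
      set η : ℕ → ℝ := fun n => if n ∈ A then 1 else g n / u with hη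
      set v : X := (x - ∑ n ∈ A ∪ B, e' n x • e n) + ∑ n ∈ B, (u * η n) • e n
        + ∑ n ∈ A \ B, ((s * u) * ε n) • e n with hv
      have hcoefv : ∀ k, e' k v
          = if k ∈ B then u * η k else if k ∈ A then (s * u) * ε k else e' k x := by
        intro k
        rw [hv]
        simp only [map_add, map_sub, coef_sum e e' hbi, Finset.mem_union, Finset.mem_sdiff]
        by_cases hkA : k ∈ A <;> by_cases hkB : k ∈ B <;> simp [hkA, hkB]
      have hgabs : ∀ n ∈ B \ A, |g n| = u := by
        intro n hn
        rcases hg n hn with h | h <;> rw [h]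
        · rw [abs_neg, abs_of_pos hu']
        · exact abs_of_pos hu'
      have hgreedy : ∀ a ∈ A, ∀ b ∉ A, s * |e' b v| ≤ |e' a v| := by
        intro a ha b hb
        have hbv : |e' b v| ≤ u := by
          rw [hcoefv b]
          by_cases hbB : b ∈ B
          · rw [if_pos hbB]
            have hηb : η b = g b / u := by rw [hη]; simp [hb]
            rw [hηb, mul_comm, div_mul_cancel₀ _ hune]
            exact le_of_eq (hgabs b (Finset.mem_sdiff.mpr ⟨hbB, hb⟩))
          · rw [if_neg hbB, if_neg hb]
            exact hub b hb
        have hav : s * u ≤ |e' a v| := by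
          rw [hcoefv a]
          by_cases haB : a ∈ B
          · rw [if_pos haB]
            have hηa : η a = 1 := by rw [hη]; simp [ha]
            rw [hηa, mul_one, abs_of_pos hu']
            nlinarith
          · rw [if_neg haB, if_pos ha, abs_mul, hεabs, mul_one,
              abs_of_pos (by positivity : (0:ℝ) < s * u)]
        calc s * |e' b v| ≤ s * u := mul_le_mul_of_nonneg_left hbv hs0.le
          _ ≤ |e' a v| := hav
      have hηs : ∀ n ∈ B, η n = 1 ∨ η n = -1 := by
        intro n hnB
        by_cases hnA : n ∈ A
        · left; rw [hη]; simp [hnA]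
        · rcases hg n (Finset.mem_sdiff.mpr ⟨hnB, hnA⟩) with h | h
          · right; rw [hη]; simp only [if_neg hnA, h]
            rw [neg_div, div_self hune]
          · left; rw [hη]; simp only [if_neg hnA, h]
            exact div_self hune
      have happ := hyp v A hgreedy u B η hωBA hηs
      have hAsplit : ∑ n ∈ A, e' n v • e n
          = ∑ n ∈ A \ B, ((s * u) * ε n) • e n + ∑ n ∈ A ∩ B, (u * η n) • e n := by
        rw [← Finset.sum_sdiff (Finset.inter_subset_left (s₂ := B)),
          Finset.sdiff_inter_self_left]
        congr 1
        · refine Finset.sum_congr rfl (fun n hn => ?_)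
          obtain ⟨h1, h2⟩ := Finset.mem_sdiff.mp hn
          rw [hcoefv n, if_neg h2, if_pos h1]
        · refine Finset.sum_congr rfl (fun n hn => ?_)
          rw [hcoefv n, if_pos (Finset.mem_inter.mp hn).2]
      have hBsplit : ∑ n ∈ B, (u * η n) • e n
          = ∑ n ∈ B \ A, (u * η n) • e n + ∑ n ∈ A ∩ B, (u * η n) • e n := by
        rw [← Finset.sum_sdiff (Finset.inter_subset_left (s₂ := A)),
          Finset.sdiff_inter_self_left, Finset.inter_comm]
      have hLv : v - ∑ n ∈ A, e' n v • e n
          = (x - ∑ n ∈ A ∪ B, e' n x • e n) + ∑ n ∈ B \ A, g n • e n := by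
        rw [hv, hAsplit, hBsplit]
        have hgη : ∑ n ∈ B \ A, (u * η n) • e n = ∑ n ∈ B \ A, g n • e n := by
          refine Finset.sum_congr rfl (fun n hn => ?_)
          have hnA : n ∉ A := (Finset.mem_sdiff.mp hn).2
          rw [hη]
          simp only [if_neg hnA]
          rw [mul_comm, div_mul_cancel₀ _ hune]
        rw [hgη]; abel
      have hRv : v - u • ∑ n ∈ B, η n • e n = R := by
        rw [hv, hR, Finset.smul_sum]
        have hss : ∑ n ∈ B, u • η n • e n = ∑ n ∈ B, (u * η n) • e n :=
          Finset.sum_congr rfl (fun n _ => smul_smul u (η n) (e n))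
        rw [hss]; abel
      rw [hLv, hRv] at happ
      exact happ
  -- rewrite R in terms of p
  have hPz : ∑ n ∈ A ∪ B, e' n z • e n = z := by
    calc ∑ n ∈ A ∪ B, e' n z • e n
        = ∑ n ∈ A ∪ B, (if n ∈ B then c n else 0) • e n :=
          Finset.sum_congr rfl (fun n _ => by rw [hz, coef_sum e e' hbi])
      _ = ∑ n ∈ B, (if n ∈ B then c n else 0) • e n := by
          refine (Finset.sum_subset Finset.subset_union_right ?_).symm
          intro n _ hn
          rw [if_neg hn, zero_smul]
      _ = ∑ n ∈ B, c n • e n :=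
          Finset.sum_congr rfl (fun n hn => by rw [if_pos hn])
      _ = z := hz.symm
  have hxz : x - ∑ n ∈ A ∪ B, e' n x • e n = p - ∑ n ∈ A ∪ B, e' n p • e n := by
    have h1 : ∑ n ∈ A ∪ B, e' n p • e n = ∑ n ∈ A ∪ B, e' n x • e n - z := by
      rw [show ∑ n ∈ A ∪ B, e' n p • e n
          = ∑ n ∈ A ∪ B, (e' n x • e n - e' n z • e n) from
        Finset.sum_congr rfl (fun n _ => by rw [hp, map_sub, sub_smul]),
        Finset.sum_sub_distrib, hPz]
    rw [h1, hp]
    abel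
  have hpxAB : ∀ n, n ∉ B → e' n p = e' n x := by
    intro n hn
    rw [hp, map_sub, hz, coef_sum e e' hbi, if_neg hn, sub_zero]
  have hRrw : R = (p - ∑ n ∈ A ∪ B, e' n p • e n) + ∑ n ∈ A \ B, ((s * u) * ε n) • e n := by
    rw [hR, hxz]
  have hy : ‖p - ∑ n ∈ A ∪ B, e' n p • e n‖ ≤ D * ‖p‖ := by
    have h := proj_err_bound e e' hnorm hbi hbasis ω s D hs0 hs1 hyp p (A ∪ B)
      (fun n => e' n p)
    rwa [sub_add_cancel] at h
  split_ifs with hst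
  · -- case s ≤ t : constant D ^ 2
    have hRb : ‖R‖ ≤ D * ‖p‖ := by
      rw [hRrw]
      refine convex_bound e (fun _ => 0) (fun n => e' n p) (D * ‖p‖)
        (fun n => (s * u) * ε n) (A \ B) (p - ∑ n ∈ A ∪ B, e' n p • e n) ?_ ?_
      · intro n hn
        obtain ⟨hnA, hnB⟩ := Finset.mem_sdiff.mp hn
        have hq : t * u ≤ |e' n p| := by rw [hpxAB n hnB]; exact hAu n hnA
        have hq0 : 0 < |e' n p| := lt_of_lt_of_le (by positivity) hq
        have hsu : s * u ≤ |e' n p| := le_trans (by nlinarith) hq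
        refine ⟨1 - (s * u) / |e' n p|, ?_, ?_, ?_⟩
        · have h7 : (s * u) / |e' n p| ≤ 1 := (div_le_one hq0).mpr hsu
          linarith
        · have h8 : 0 ≤ (s * u) / |e' n p| := by positivity
          linarith
        · have hqne : e' n p ≠ 0 := by
            intro h0
            rw [h0, abs_zero] at hq0
            exact lt_irrefl 0 hq0
          simp only [hε]
          by_cases hsgn : e' n p < 0
          · rw [if_pos hsgn, abs_of_neg hsgn]
            field_simp [hqne]
            try ring
          · rw [if_neg hsgn, abs_of_nonneg (not_lt.mp hsgn)]
            field_simp [hqne]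
            try ring
      · intro g hg
        set S : Finset ℕ := (A \ B).filter (fun n => g n ≠ 0) with hS
        have hsum : ∑ n ∈ A \ B, g n • e n = ∑ n ∈ S, e' n p • e n := by
          have h1 : ∑ n ∈ A \ B, g n • e n = ∑ n ∈ S, g n • e n := by
            refine (Finset.sum_subset (Finset.filter_subset _ _) ?_).symm
            intro n hn hns
            have hg0 : g n = 0 := by
              by_contra hne'
              exact hns (Finset.mem_filter.mpr ⟨hn, hne'⟩)
            rw [hg0, zero_smul]
          rw [h1]
          refine Finset.sum_congr rfl (fun n hn => ?_)
          obtain ⟨hn1, hn2⟩ := Finset.mem_filter.mp hn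
          rcases hg n hn1 with h | h
          · exact absurd h hn2
          · rw [h]
        have hSsub : S ⊆ A ∪ B :=
          (Finset.filter_subset _ _).trans
            ((Finset.sdiff_subset).trans Finset.subset_union_left)
        have hid : (p - ∑ n ∈ A ∪ B, e' n p • e n) + ∑ n ∈ S, e' n p • e n
            = p - ∑ n ∈ (A ∪ B) \ S, e' n p • e n := by
          rw [← Finset.sum_sdiff hSsub]
          abel
        rw [hsum, hid]
        have h := proj_err_bound e e' hnorm hbi hbasis ω s D hs0 hs1 hyp p ((A ∪ B) \ S)
          (fun n => e' n p)
        rwa [sub_add_cancel] at h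
    calc ‖x - ∑ n ∈ A, e' n x • e n‖ ≤ D * ‖R‖ := stepA
      _ ≤ D * (D * ‖p‖) := mul_le_mul_of_nonneg_left hRb hD.le
      _ = D ^ 2 * ‖p‖ := by ring
  · -- case t < s
    have hRb : ‖R‖ ≤ (1 + s / t) * (D * ‖p‖) := by
      rw [hRrw]
      refine convex_bound e (fun _ => 0) (fun n => (s / t) * e' n p) ((1 + s / t) * (D * ‖p‖))
        (fun n => (s * u) * ε n) (A \ B) (p - ∑ n ∈ A ∪ B, e' n p • e n) ?_ ?_
      · intro n hn
        obtain ⟨hnA, hnB⟩ := Finset.mem_sdiff.mp hn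
        have hq : t * u ≤ |e' n p| := by rw [hpxAB n hnB]; exact hAu n hnA
        have hq0 : 0 < |e' n p| := lt_of_lt_of_le (by positivity) hq
        refine ⟨1 - (t * u) / |e' n p|, ?_, ?_, ?_⟩
        · have h7 : (t * u) / |e' n p| ≤ 1 := (div_le_one hq0).mpr hq
          linarith
        · have h8 : 0 ≤ (t * u) / |e' n p| := by positivity
          linarith
        · have hqne : e' n p ≠ 0 := by
            intro h0
            rw [h0, abs_zero] at hq0
            exact lt_irrefl 0 hq0
          simp only [hε]
          by_cases hsgn : e' n p < 0
          · rw [if_pos hsgn, abs_of_neg hsgn]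
            field_simp [hqne]
            try ring
          · rw [if_neg hsgn, abs_of_nonneg (not_lt.mp hsgn)]
            field_simp [hqne]
            try ring
      · intro g hg
        set S : Finset ℕ := (A \ B).filter (fun n => g n ≠ 0) with hS
        have hsum : ∑ n ∈ A \ B, g n • e n = (s / t) • ∑ n ∈ S, e' n p • e n := by
          have h1 : ∑ n ∈ A \ B, g n • e n = ∑ n ∈ S, g n • e n := by
            refine (Finset.sum_subset (Finset.filter_subset _ _) ?_).symm
            intro n hn hns
            have hg0 : g n = 0 := by
              by_contra hne'
              exact hns (Finset.mem_filter.mpr ⟨hn, hne'⟩)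
            rw [hg0, zero_smul]
          rw [h1, Finset.smul_sum]
          refine Finset.sum_congr rfl (fun n hn => ?_)
          obtain ⟨hn1, hn2⟩ := Finset.mem_filter.mp hn
          rcases hg n hn1 with h | h
          · exact absurd h hn2
          · rw [h, smul_smul]
        rw [hsum]
        have hst' : 0 ≤ s / t := by positivity
        calc ‖(p - ∑ n ∈ A ∪ B, e' n p • e n) + (s / t) • ∑ n ∈ S, e' n p • e n‖
            ≤ ‖p - ∑ n ∈ A ∪ B, e' n p • e n‖ + ‖(s / t) • ∑ n ∈ S, e' n p • e n‖ :=
              norm_add_le _ _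
          _ = ‖p - ∑ n ∈ A ∪ B, e' n p • e n‖ + (s / t) * ‖∑ n ∈ S, e' n p • e n‖ := by
              rw [norm_smul, Real.norm_eq_abs, abs_of_nonneg hst']
          _ ≤ D * ‖p‖ + (s / t) * (D * ‖p‖) := by
              refine add_le_add hy (mul_le_mul_of_nonneg_left ?_ hst')
              exact proj_norm_bound e e' hnorm hbi hbasis ω s D hs0 hs1 hD hyp p S
          _ = (1 + s / t) * (D * ‖p‖) := by ring
    have hts : (t + s) / t = 1 + s / t := by
      rw [add_div, div_self (ne_of_gt ht0)]
    calc ‖x - ∑ n ∈ A, e' n x • e n‖ ≤ D * ‖R‖ := stepA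
      _ ≤ D * ((1 + s / t) * (D * ‖p‖)) := mul_le_mul_of_nonneg_left hRb hD.le
      _ ≤ (2 + ((t + s) / t) * D) * D * ‖p‖ := by
          rw [hts]
          have h2 : 0 ≤ s / t := by positivity
          nlinarith [mul_nonneg hD.le (norm_nonneg p), norm_nonneg p]
end

section
/- Let X be a Banach space with normalized Schauder basis (eₙ), 0 < s ≤ 1, and suppose ‖y − Gˢ(y)‖ ≤ D(s)·𝒟*_N(y) for all y, N, and s-greedy operators Gˢ of order N, where 𝒟*_N(y) = inf{ ‖y − α·1_{ηB}‖ : α ∈ ℝ, |B| = N, η ∈ {±1}^B }. Let x ∈ X, let A be an s-greedy set for x with |A| = m, and let B be any set with |B| = m. Then for any choice of signs (η_j)_{j∈B∖A}, with γ = max_{j∈B∖A}|e_j*(x)|, one has ‖x − P_{A∪B}(x) + γ·1_{η(B∖A)}‖ ≤ D(s)·‖x − P_B(x)‖. -/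
open Finset

theorem stmt7 {X : Type*} [NormedAddCommGroup X] [NormedSpace ℝ X] [CompleteSpace X]
    (e : ℕ → X) (e' : ℕ → X →L[ℝ] ℝ)
    (hnorm : ∀ n, ‖e n‖ = 1)
    (hbi : ∀ n m, e' n (e m) = if n = m then 1 else 0)
    (hbasis : ∀ x : X,
      Filter.Tendsto (fun N => ∑ n ∈ Finset.range N, e' n x • e n) Filter.atTop (nhds x))
    (s D : ℝ) (hs0 : 0 < s) (hs1 : s ≤ 1) (hD : 0 < D)
    -- hypothesis: `‖y − Gˢ(y)‖ ≤ D·𝒟*_N(y)` for all `y`, all `s`-greedy sets of `y`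
    (hyp : ∀ (y : X) (A : Finset ℕ),
      (∀ a ∈ A, ∀ b ∉ A, s * |e' b y| ≤ |e' a y|) →
      ∀ (α : ℝ) (B : Finset ℕ) (η : ℕ → ℝ), B.card = A.card →
        (∀ n ∈ B, η n = 1 ∨ η n = -1) →
        ‖y - ∑ n ∈ A, e' n y • e n‖ ≤ D * ‖y - α • ∑ n ∈ B, η n • e n‖)
    (x : X) (A B : Finset ℕ) (hcard : B.card = A.card)
    (hA : ∀ a ∈ A, ∀ b ∉ A, s * |e' b x| ≤ |e' a x|)
    (hne : (B \ A).Nonempty) :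
    ∀ η : ℕ → ℝ, (∀ n ∈ B \ A, η n = 1 ∨ η n = -1) →
      ‖x - ∑ n ∈ A ∪ B, e' n x • e n +
          ((B \ A).sup' hne fun j => |e' j x|) • ∑ n ∈ B \ A, η n • e n‖
        ≤ D * ‖x - ∑ n ∈ B, e' n x • e n‖ := by
  intro η hη
  set γ : ℝ := (B \ A).sup' hne fun j => |e' j x| with hγdef
  -- evaluation of coordinate functionals on finite sums
  have heval : ∀ (S : Finset ℕ) (c : ℕ → ℝ) (n : ℕ),
      e' n (∑ m ∈ S, c m • e m) = if n ∈ S then c n else 0 := by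
    intro S c n
    rw [map_sum]
    simp only [map_smul, hbi, smul_eq_mul, mul_ite, mul_one, mul_zero]
    simp [Finset.sum_ite_eq' S n c]
  set y : X := x - ∑ n ∈ B, e' n x • e n + γ • ∑ n ∈ B \ A, η n • e n with hy
  have hyval : ∀ n, e' n y = e' n x - (if n ∈ B then e' n x else 0)
      + γ * (if n ∈ B \ A then η n else 0) := by
    intro n
    simp only [hy, map_add, map_sub, map_smul, heval, smul_eq_mul]
  -- greedy condition for y on A \ B
  have hgre : ∀ a ∈ A \ B, ∀ b ∉ A \ B, s * |e' b y| ≤ |e' a y| := by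
    intro a ha b hb
    have haA := (Finset.mem_sdiff.1 ha).1
    have haB := (Finset.mem_sdiff.1 ha).2
    have hay : e' a y = e' a x := by
      rw [hyval a, if_neg haB, if_neg (fun h => haB (Finset.mem_sdiff.1 h).1)]
      ring
    rw [hay]
    by_cases hbBA : b ∈ B \ A
    · have hbB := (Finset.mem_sdiff.1 hbBA).1
      have hby : e' b y = γ * η b := by
        rw [hyval b, if_pos hbB, if_pos hbBA]; ring
      have hηb : |η b| = 1 := by rcases hη b hbBA with h | h <;> simp [h]
      obtain ⟨j, hj, hjγ⟩ := Finset.exists_mem_eq_sup' hne fun j => |e' j x|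
      have hjA := (Finset.mem_sdiff.1 hj).2
      have hγ0 : 0 ≤ γ := hγdef ▸ hjγ ▸ abs_nonneg _
      rw [hby, abs_mul, hηb, mul_one, abs_of_nonneg hγ0]
      calc s * γ = s * |e' j x| := by rw [hγdef, hjγ]
        _ ≤ |e' a x| := hA a haA j hjA
    · by_cases hbB : b ∈ B
      · have hbA : b ∈ A := by
          by_contra hbA
          exact hbBA (Finset.mem_sdiff.2 ⟨hbB, hbA⟩)
        have : e' b y = 0 := by rw [hyval b, if_pos hbB, if_neg hbBA]; ring
        rw [this, abs_zero, mul_zero]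
        exact abs_nonneg _
      · have hbA : b ∉ A := fun h => hb (Finset.mem_sdiff.2 ⟨h, hbB⟩)
        have : e' b y = e' b x := by rw [hyval b, if_neg hbB, if_neg hbBA]; ring
        rw [this]
        exact hA a haA b hbA
  have hcard2 : (B \ A).card = (A \ B).card := by
    have h1 := Finset.card_sdiff_add_card_inter B A
    have h2 := Finset.card_sdiff_add_card_inter A B
    rw [Finset.inter_comm] at h2
    omega
  have key := hyp y (A \ B) hgre γ (B \ A) η hcard2 hη
  -- simplify the two sides
  have hPy : ∑ n ∈ A \ B, e' n y • e n = ∑ n ∈ A \ B, e' n x • e n := by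
    refine Finset.sum_congr rfl fun n hn => ?_
    have hnB := (Finset.mem_sdiff.1 hn).2
    have hnBA : n ∉ B \ A := fun h => hnB (Finset.mem_sdiff.1 h).1
    rw [hyval n, if_neg hnB, if_neg hnBA]
    ring
  have hsum : ∑ n ∈ A ∪ B, e' n x • e n
      = ∑ n ∈ B, e' n x • e n + ∑ n ∈ A \ B, e' n x • e n := by
    rw [← Finset.sum_union (Finset.sdiff_disjoint.symm), Finset.union_comm B (A \ B),
      Finset.sdiff_union_self_eq_union, Finset.union_comm]
  have hleft : y - ∑ n ∈ A \ B, e' n y • e n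
      = x - ∑ n ∈ A ∪ B, e' n x • e n + γ • ∑ n ∈ B \ A, η n • e n := by
    rw [hPy, hsum, hy]; abel
  have hright : y - γ • ∑ n ∈ B \ A, η n • e n = x - ∑ n ∈ B, e' n x • e n := by
    rw [hy]; abel
  rw [hleft, hright] at key
  exact key
end

section
/- Let ℬ be a normalized Schauder basis of a Banach space X. Then ℬ has the PCCG property (there exists C with ‖x − 𝒢_m(x)‖ ≤ C·𝒟*_m(x) for all x, m and all greedy approximants 𝒢_m) if and only if ℬ is greedy (there exists C' with ‖x − 𝒢_m(x)‖ ≤ C'·σ_m(x) for all x, m and all greedy approximants). -/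
open Finset

section PCCGAux

variable {X : Type*} [NormedAddCommGroup X] [NormedSpace ℝ X]
variable (e : ℕ → X) (e' : ℕ → X →L[ℝ] ℝ)

theorem my_coef_sum (hbi : ∀ n m, e' n (e m) = if n = m then 1 else 0)
    (S : Finset ℕ) (b : ℕ → ℝ) (m : ℕ) :
    e' m (∑ n ∈ S, b n • e n) = if m ∈ S then b m else 0 := by
  rw [map_sum]
  simp only [map_smul, hbi, smul_eq_mul, mul_ite, mul_one, mul_zero]
  exact Finset.sum_ite_eq S m b

theorem my_convex_bound (w u : X) (t : ℝ) (ht : |t| ≤ 1) :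
    ‖w + t • u‖ ≤ max ‖w + u‖ ‖w - u‖ := by
  obtain ⟨h1', h2'⟩ := abs_le.1 ht
  have h1 : (0:ℝ) ≤ (1 + t)/2 := by linarith
  have h2 : (0:ℝ) ≤ (1 - t)/2 := by linarith
  have hw : w + t • u = ((1+t)/2) • (w + u) + ((1-t)/2) • (w - u) := by
    match_scalars <;> ring
  rw [hw]
  calc ‖((1+t)/2) • (w + u) + ((1-t)/2) • (w - u)‖
      ≤ ((1+t)/2) * ‖w+u‖ + ((1-t)/2) * ‖w-u‖ := by
        refine (norm_add_le _ _).trans ?_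
        rw [norm_smul, norm_smul, Real.norm_eq_abs, abs_of_nonneg h1,
          Real.norm_eq_abs, abs_of_nonneg h2]
    _ ≤ ((1+t)/2) * max ‖w+u‖ ‖w-u‖ + ((1-t)/2) * max ‖w+u‖ ‖w-u‖ := by
        gcongr
        · exact le_max_left _ _
        · exact le_max_right _ _
    _ = max ‖w+u‖ ‖w-u‖ := by ring

theorem my_cvx (S : Finset ℕ) : ∀ (t b : ℕ → ℝ), (∀ n ∈ S, |t n| ≤ 1) → ∀ v : X,
    ∃ θ : ℕ → ℝ, (∀ n ∈ S, θ n = 1 ∨ θ n = -1) ∧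
      ‖v + ∑ n ∈ S, (t n * b n) • e n‖ ≤ ‖v + ∑ n ∈ S, (θ n * b n) • e n‖ := by
  induction S using Finset.induction_on with
  | empty => exact fun t b _ v => ⟨fun _ => 1, by simp, le_rfl⟩
  | @insert s S hs ih =>
    intro t b ht v
    obtain ⟨θ₀, hθ₀, hle⟩ := ih t b (fun n hn => ht n (mem_insert_of_mem hn))
      (v + (t s * b s) • e s)
    set w := v + ∑ n ∈ S, (θ₀ n * b n) • e n with hw
    have hts : |t s| ≤ 1 := ht s (mem_insert_self s S)
    have hconv : ‖w + (t s) • (b s • e s)‖ ≤ max ‖w + b s • e s‖ ‖w - b s • e s‖ :=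
      my_convex_bound w (b s • e s) (t s) hts
    by_cases hc : ‖w - b s • e s‖ ≤ ‖w + b s • e s‖
    · refine ⟨Function.update θ₀ s 1, ?_, ?_⟩
      · intro n hn
        rcases Finset.mem_insert.1 hn with h | h
        · subst h; left; simp [Function.update_self]
        · rw [Function.update_of_ne (by rintro rfl; exact hs h)]; exact hθ₀ n h
      · rw [Finset.sum_insert hs, Finset.sum_insert hs]
        have hsum : ∑ n ∈ S, (Function.update θ₀ s 1 n * b n) • e n
            = ∑ n ∈ S, (θ₀ n * b n) • e n := by
          refine Finset.sum_congr rfl fun n hn => ?_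
          rw [Function.update_of_ne (by rintro rfl; exact hs hn)]
        rw [hsum, Function.update_self, one_mul]
        calc ‖v + ((t s * b s) • e s + ∑ n ∈ S, (t n * b n) • e n)‖
            = ‖v + (t s * b s) • e s + ∑ n ∈ S, (t n * b n) • e n‖ := by rw [add_assoc]
          _ ≤ ‖v + (t s * b s) • e s + ∑ n ∈ S, (θ₀ n * b n) • e n‖ := hle
          _ = ‖w + (t s) • (b s • e s)‖ := by rw [smul_smul]; congr 1; rw [hw]; abel
          _ ≤ ‖w + b s • e s‖ := by rw [max_eq_left hc] at hconv; exact hconv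
          _ = ‖v + (b s • e s + ∑ n ∈ S, (θ₀ n * b n) • e n)‖ := by
              rw [hw]; congr 1; abel
    · refine ⟨Function.update θ₀ s (-1), ?_, ?_⟩
      · intro n hn
        rcases Finset.mem_insert.1 hn with h | h
        · subst h; right; simp [Function.update_self]
        · rw [Function.update_of_ne (by rintro rfl; exact hs h)]; exact hθ₀ n h
      · rw [Finset.sum_insert hs, Finset.sum_insert hs]
        have hsum : ∑ n ∈ S, (Function.update θ₀ s (-1) n * b n) • e n
            = ∑ n ∈ S, (θ₀ n * b n) • e n := by
          refine Finset.sum_congr rfl fun n hn => ?_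
          rw [Function.update_of_ne (by rintro rfl; exact hs hn)]
        rw [hsum, Function.update_self]
        calc ‖v + ((t s * b s) • e s + ∑ n ∈ S, (t n * b n) • e n)‖
            = ‖v + (t s * b s) • e s + ∑ n ∈ S, (t n * b n) • e n‖ := by rw [add_assoc]
          _ ≤ ‖v + (t s * b s) • e s + ∑ n ∈ S, (θ₀ n * b n) • e n‖ := hle
          _ = ‖w + (t s) • (b s • e s)‖ := by rw [smul_smul]; congr 1; rw [hw]; abel
          _ ≤ ‖w - b s • e s‖ := by
              rw [max_eq_right (le_of_not_ge hc)] at hconv; exact hconv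
          _ = ‖v + ((-1 * b s) • e s + ∑ n ∈ S, (θ₀ n * b n) • e n)‖ := by
              rw [hw]; congr 1
              rw [neg_one_mul, neg_smul]; abel

theorem my_dom (hbi : ∀ n m, e' n (e m) = if n = m then 1 else 0) (C : ℝ)
    (hU : ∀ (x : X) (A : Finset ℕ), ‖x - ∑ n ∈ A, e' n x • e n‖ ≤ C * ‖x‖)
    (S : Finset ℕ) (a b : ℕ → ℝ) (hab : ∀ n ∈ S, |a n| ≤ |b n|) :
    ‖∑ n ∈ S, a n • e n‖ ≤ (1 + 2*C) * ‖∑ n ∈ S, b n • e n‖ := by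
  set t : ℕ → ℝ := fun n => if b n = 0 then 0 else a n / b n with htdef
  have ht : ∀ n ∈ S, |t n| ≤ 1 := by
    intro n hn
    by_cases h : b n = 0
    · simp [htdef, h]
    · simp only [htdef, if_neg h, abs_div]
      rw [div_le_one (abs_pos.2 h)]
      exact hab n hn
  have htb : ∀ n ∈ S, t n * b n = a n := by
    intro n hn
    by_cases h : b n = 0
    · have : |a n| ≤ 0 := by simpa [h] using hab n hn
      have ha : a n = 0 := abs_nonpos_iff.1 this
      simp [htdef, h, ha]
    · simp [htdef, if_neg h, div_mul_cancel₀ _ h]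
  obtain ⟨θ, hθ, hle⟩ := my_cvx e S t b ht 0
  simp only [zero_add] at hle
  have hrw : ∑ n ∈ S, a n • e n = ∑ n ∈ S, (t n * b n) • e n :=
    Finset.sum_congr rfl fun n hn => by rw [htb n hn]
  rw [hrw]
  refine hle.trans ?_
  set T := S.filter (fun n => θ n = -1) with hT
  set u := ∑ n ∈ S, b n • e n with hu
  have hsplit : ∑ n ∈ S, (θ n * b n) • e n = u - (2:ℝ) • ∑ n ∈ T, e' n u • e n := by
    have h2 : ∑ n ∈ T, e' n u • e n = ∑ n ∈ S, (if θ n = -1 then b n else 0) • e n := by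
      rw [hT, Finset.sum_filter]
      refine Finset.sum_congr rfl fun n hn => ?_
      by_cases h : θ n = -1
      · rw [if_pos h, if_pos h, my_coef_sum e e' hbi, if_pos hn]
      · rw [if_neg h, if_neg h, zero_smul]
    rw [h2, hu, Finset.smul_sum, ← Finset.sum_sub_distrib]
    refine Finset.sum_congr rfl fun n hn => ?_
    rcases hθ n hn with h | h
    · rw [h]; norm_num
    · rw [h, if_pos rfl, smul_smul]
      rw [show ((-1: ℝ)) * b n = b n - 2 * b n by ring, sub_smul]
  rw [hsplit]
  have h1 : ‖u - ∑ n ∈ T, e' n u • e n‖ ≤ C * ‖u‖ := hU u T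
  have h2 : ‖∑ n ∈ T, e' n u • e n‖ ≤ (1 + C) * ‖u‖ := by
    have : ∑ n ∈ T, e' n u • e n = u - (u - ∑ n ∈ T, e' n u • e n) := by abel
    rw [this]
    refine (norm_sub_le _ _).trans ?_
    rw [show (1 + C) * ‖u‖ = ‖u‖ + C * ‖u‖ by ring]
    exact add_le_add le_rfl h1
  calc ‖u - (2:ℝ) • ∑ n ∈ T, e' n u • e n‖
      = ‖(u - ∑ n ∈ T, e' n u • e n) - ∑ n ∈ T, e' n u • e n‖ := by
        congr 1; rw [two_smul]; abel
    _ ≤ ‖u - ∑ n ∈ T, e' n u • e n‖ + ‖∑ n ∈ T, e' n u • e n‖ := norm_sub_le _ _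
    _ ≤ C * ‖u‖ + (1 + C) * ‖u‖ := add_le_add h1 h2
    _ = (1 + 2*C) * ‖u‖ := by ring

theorem my_uncond
    (hnorm : ∀ n, ‖e n‖ = 1)
    (hbi : ∀ n m, e' n (e m) = if n = m then 1 else 0)
    (hbasis : ∀ x : X,
      Filter.Tendsto (fun N => ∑ n ∈ Finset.range N, e' n x • e n) Filter.atTop (nhds x))
    (C : ℝ)
    (hP : ∀ (x : X) (A : Finset ℕ),
      (∀ a ∈ A, ∀ b ∉ A, |e' b x| ≤ |e' a x|) →
      ∀ (α : ℝ) (B : Finset ℕ) (η : ℕ → ℝ), B.card = A.card →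
        (∀ n ∈ B, η n = 1 ∨ η n = -1) →
        ‖x - ∑ n ∈ A, e' n x • e n‖ ≤ C * ‖x - α • ∑ n ∈ B, η n • e n‖)
    (x : X) (A : Finset ℕ) :
    ‖x - ∑ n ∈ A, e' n x • e n‖ ≤ C * ‖x‖ := by
  have hcoef0 : Filter.Tendsto (fun n => |e' n x|) Filter.atTop (nhds 0) := by
    have h1 : Filter.Tendsto (fun n => (∑ k ∈ Finset.range (n+1), e' k x • e k)
        - ∑ k ∈ Finset.range n, e' k x • e k) Filter.atTop (nhds 0) := by
      have := ((hbasis x).comp (Filter.tendsto_add_atTop_nat 1)).sub (hbasis x)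
      simpa using this
    have h2 : ∀ n : ℕ, (∑ k ∈ Finset.range (n+1), e' k x • e k)
        - ∑ k ∈ Finset.range n, e' k x • e k = e' n x • e n := by
      intro n; rw [Finset.sum_range_succ]; abel
    have h3 : Filter.Tendsto (fun n => e' n x • e n) Filter.atTop (nhds 0) := by
      simpa only [h2] using h1
    have h4 := h3.norm
    simp only [norm_zero, norm_smul, Real.norm_eq_abs, hnorm, mul_one] at h4
    exact h4
  obtain ⟨M, hM⟩ := hcoef0.bddAbove_range
  have hM' : ∀ n, |e' n x| ≤ M := fun n => hM (Set.mem_range_self n)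
  have hM0 : 0 ≤ M := le_trans (abs_nonneg _) (hM' 0)
  set ε : ℕ → ℝ := fun n => if 0 ≤ e' n x then 1 else -1 with hε
  set y := x + M • ∑ n ∈ A, ε n • e n with hy
  have hcoefy : ∀ n, e' n y = e' n x + M * (if n ∈ A then ε n else 0) := by
    intro n
    rw [hy, map_add, map_smul, smul_eq_mul]
    congr 1
    congr 1
    rw [map_sum]
    simp only [map_smul, hbi, smul_eq_mul, mul_ite, mul_one, mul_zero]
    exact Finset.sum_ite_eq A n ε
  have habs : ∀ a ∈ A, |e' a y| = |e' a x| + M := by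
    intro a _
    rw [hcoefy a, if_pos ‹a ∈ A›]
    by_cases h : 0 ≤ e' a x
    · rw [hε]; simp only [if_pos h, mul_one]
      rw [abs_of_nonneg (by linarith), abs_of_nonneg h]
    · rw [hε]; simp only [if_neg h, mul_neg_one]
      push_neg at h
      rw [abs_of_nonpos (by linarith), abs_of_neg h]; ring
  have hgy : ∀ a ∈ A, ∀ b ∉ A, |e' b y| ≤ |e' a y| := by
    intro a ha b hb
    rw [habs a ha, hcoefy b, if_neg hb, mul_zero, add_zero]
    calc |e' b x| ≤ M := hM' b
      _ ≤ |e' a x| + M := by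
        have := abs_nonneg (e' a x); linarith
  have hsigns : ∀ n ∈ A, ε n = 1 ∨ ε n = -1 := by
    intro n _; rw [hε]; by_cases h : 0 ≤ e' n x
    · left; simp [h]
    · right; simp [h]
  have hbound := hP y A hgy M A ε rfl hsigns
  have hyP : y - ∑ n ∈ A, e' n y • e n = x - ∑ n ∈ A, e' n x • e n := by
    have : ∑ n ∈ A, e' n y • e n
        = (∑ n ∈ A, e' n x • e n) + M • ∑ n ∈ A, ε n • e n := by
      rw [Finset.smul_sum, ← Finset.sum_add_distrib]
      refine Finset.sum_congr rfl fun n hn => ?_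
      rw [hcoefy n, if_pos hn, add_smul, smul_smul]
    rw [hy, this]; abel
  have hyx : y - M • ∑ n ∈ A, ε n • e n = x := by rw [hy]; abel
  rw [hyP, hyx] at hbound
  exact hbound

theorem my_decomp_abel {Y : Type*} [AddCommGroup Y]
    (x z pAx pAz pSx pSz : Y) (h : pAz + pSz = z) :
    x - pAx = ((x - z) - (pAx - pAz)) - (pSx - pSz) + pSx := by
  rw [← h]; abel

end PCCGAux

theorem stmt8 {X : Type*} [NormedAddCommGroup X] [NormedSpace ℝ X] [CompleteSpace X]
    (e : ℕ → X) (e' : ℕ → X →L[ℝ] ℝ)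
    (hnorm : ∀ n, ‖e n‖ = 1)
    (hbi : ∀ n m, e' n (e m) = if n = m then 1 else 0)
    (hbasis : ∀ x : X,
      Filter.Tendsto (fun N => ∑ n ∈ Finset.range N, e' n x • e n) Filter.atTop (nhds x)) :
    -- PCCG property
    (∃ C > (0 : ℝ), ∀ (x : X) (A : Finset ℕ),
      (∀ a ∈ A, ∀ b ∉ A, |e' b x| ≤ |e' a x|) →
      ∀ (α : ℝ) (B : Finset ℕ) (η : ℕ → ℝ), B.card = A.card →
        (∀ n ∈ B, η n = 1 ∨ η n = -1) →
        ‖x - ∑ n ∈ A, e' n x • e n‖ ≤ C * ‖x - α • ∑ n ∈ B, η n • e n‖)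
    ↔
    -- greedy
    (∃ C' > (0 : ℝ), ∀ (x : X) (A : Finset ℕ),
      (∀ a ∈ A, ∀ b ∉ A, |e' b x| ≤ |e' a x|) →
      ∀ (B : Finset ℕ) (c : ℕ → ℝ), B.card = A.card →
        ‖x - ∑ n ∈ A, e' n x • e n‖ ≤ C' * ‖x - ∑ n ∈ B, c n • e n‖) := by
  constructor
  · rintro ⟨C, hC, hP⟩
    have hU : ∀ (x : X) (A : Finset ℕ), ‖x - ∑ n ∈ A, e' n x • e n‖ ≤ C * ‖x‖ :=
      my_uncond e e' hnorm hbi hbasis C hP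
    have hproj : ∀ (w : X) (D : Finset ℕ), ‖∑ n ∈ D, e' n w • e n‖ ≤ (1 + C) * ‖w‖ := by
      intro w D
      have h := hU w D
      have : ∑ n ∈ D, e' n w • e n = w - (w - ∑ n ∈ D, e' n w • e n) := by abel
      rw [this]
      refine (norm_sub_le _ _).trans ?_
      rw [show (1 + C) * ‖w‖ = ‖w‖ + C * ‖w‖ by ring]
      exact add_le_add le_rfl h
    set K := 1 + 2*C with hK
    have hKpos : (0:ℝ) < K := by rw [hK]; linarith
    refine ⟨C + (1 + C) + K^2*C*(1+C), by positivity, ?_⟩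
    intro x A hA B c hcard
    set z := ∑ n ∈ B, c n • e n with hz
    set S := B \ A with hS
    set T := A \ B with hT
    -- splitting z
    have hzcoef : ∀ m, e' m z = if m ∈ B then c m else 0 := fun m =>
      my_coef_sum e e' hbi B c m
    have hPD : ∀ D : Finset ℕ, ∑ n ∈ D, e' n z • e n = ∑ n ∈ D ∩ B, c n • e n := by
      intro D
      rw [← Finset.sum_filter_add_sum_filter_not D (· ∈ B)]
      have h1 : ∑ n ∈ D.filter (· ∈ B), e' n z • e n
          = ∑ n ∈ D ∩ B, c n • e n := by
        rw [Finset.filter_mem_eq_inter]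
        refine Finset.sum_congr rfl fun n hn => ?_
        rw [hzcoef n, if_pos (Finset.mem_inter.1 hn).2]
      have h2 : ∑ n ∈ D.filter (¬ · ∈ B), e' n z • e n = 0 := by
        refine Finset.sum_eq_zero fun n hn => ?_
        rw [hzcoef n, if_neg (Finset.mem_filter.1 hn).2, zero_smul]
      rw [h1, h2, add_zero]
    have hzsplit : (∑ n ∈ A, e' n z • e n) + ∑ n ∈ S, e' n z • e n = z := by
      rw [hPD A, hPD S]
      have hSB : S ∩ B = B \ A := by
        rw [hS, Finset.inter_eq_left]
        exact Finset.sdiff_subset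
      rw [hSB, Finset.inter_comm, hz]
      exact Finset.sum_inter_add_sum_sdiff B A _
    have hPsub : ∀ (D : Finset ℕ) (u v : X),
        ∑ n ∈ D, e' n (u - v) • e n
          = (∑ n ∈ D, e' n u • e n) - ∑ n ∈ D, e' n v • e n := by
      intro D u v
      rw [← Finset.sum_sub_distrib]
      exact Finset.sum_congr rfl fun n _ => by rw [map_sub, sub_smul]
    have key := my_decomp_abel x z (∑ n ∈ A, e' n x • e n) (∑ n ∈ A, e' n z • e n)
      (∑ n ∈ S, e' n x • e n) (∑ n ∈ S, e' n z • e n) hzsplit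
    rw [← hPsub A x z, ← hPsub S x z] at key
    -- three bounds
    have t1 : ‖(x - z) - ∑ n ∈ A, e' n (x - z) • e n‖ ≤ C * ‖x - z‖ := hU (x - z) A
    have t2 : ‖∑ n ∈ S, e' n (x - z) • e n‖ ≤ (1 + C) * ‖x - z‖ := hproj (x - z) S
    have t3 : ‖∑ n ∈ S, e' n x • e n‖ ≤ (K^2*C*(1+C)) * ‖x - z‖ := by
      by_cases hSe : S = ∅
      · rw [hSe]
        simp only [Finset.sum_empty, norm_zero]
        positivity
      · have hScard : S.card = T.card := Finset.card_sdiff_comm hcard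
        have hTne : T.Nonempty := by
          rw [← Finset.card_pos, ← hScard, Finset.card_pos]
          exact Finset.nonempty_of_ne_empty hSe
        obtain ⟨a₀, ha₀, hmin⟩ := T.exists_min_image (fun n => |e' n x|) hTne
        set lam := |e' a₀ x| with hlam
        have hlam0 : 0 ≤ lam := abs_nonneg _
        have ha₀A : a₀ ∈ A := (Finset.mem_sdiff.1 ha₀).1
        have hSle : ∀ n ∈ S, |e' n x| ≤ lam := fun n hn =>
          hA a₀ ha₀A n (Finset.mem_sdiff.1 hn).2
        set ε : ℕ → ℝ := fun n => if 0 ≤ e' n x then 1 else -1 with hε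
        have hεabs : ∀ n, |ε n| = 1 := by
          intro n; rw [hε]; by_cases h : 0 ≤ e' n x <;> simp [h]
        -- superdemocracy instance from PCCG
        have hdisj : Disjoint S T := by
          rw [Finset.disjoint_left]
          intro n hnS hnT
          exact (Finset.mem_sdiff.1 hnS).2 (Finset.mem_sdiff.1 hnT).1
        have hsd : ‖∑ n ∈ S, (1:ℝ) • e n‖ ≤ C * ‖∑ n ∈ T, ε n • e n‖ := by
          set d : ℕ → ℝ := fun n => if n ∈ S then 1 else ε n with hd
          set x₀ := ∑ n ∈ S ∪ T, d n • e n with hx₀def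
          have hcoefx₀ : ∀ m, e' m x₀ = if m ∈ S ∪ T then d m else 0 := fun m =>
            my_coef_sum e e' hbi (S ∪ T) d m
          have hg : ∀ a ∈ T, ∀ b ∉ T, |e' b x₀| ≤ |e' a x₀| := by
            intro a ha b hb
            have haS : a ∉ S := Finset.disjoint_right.1 hdisj ha
            have ha' : |e' a x₀| = 1 := by
              rw [hcoefx₀ a, if_pos (Finset.mem_union_right S ha), hd]
              simp only [if_neg haS]
              exact hεabs a
            rw [ha', hcoefx₀ b]
            by_cases hbu : b ∈ S ∪ T
            · rw [if_pos hbu, hd]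
              have hbS : b ∈ S := by
                rcases Finset.mem_union.1 hbu with h | h
                · exact h
                · exact absurd h hb
              simp only [if_pos hbS, abs_one, le_refl]
            · rw [if_neg hbu]; simp
          have happ := hP x₀ T hg 1 S (fun _ => 1) hScard (fun n _ => Or.inl rfl)
          have hx₀ : x₀ = (∑ n ∈ S, (1:ℝ) • e n) + ∑ n ∈ T, ε n • e n := by
            rw [hx₀def, Finset.sum_union hdisj]
            congr 1
            · exact Finset.sum_congr rfl fun n hn => by rw [hd]; simp [if_pos hn]
            · refine Finset.sum_congr rfl fun n hn => ?_
              rw [hd]; simp only [if_neg (Finset.disjoint_right.1 hdisj hn)]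
          have hPT : ∑ n ∈ T, e' n x₀ • e n = ∑ n ∈ T, ε n • e n := by
            refine Finset.sum_congr rfl fun n hn => ?_
            rw [hcoefx₀ n, if_pos (Finset.mem_union_right S hn), hd]
            simp only [if_neg (Finset.disjoint_right.1 hdisj hn)]
          have e1 : x₀ - ∑ n ∈ T, e' n x₀ • e n = ∑ n ∈ S, (1:ℝ) • e n := by
            rw [hPT, hx₀]; abel
          have e2 : x₀ - (1:ℝ) • ∑ n ∈ S, (fun _ => (1:ℝ)) n • e n
              = ∑ n ∈ T, ε n • e n := by
            rw [one_smul, hx₀]; abel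
          rw [e1, e2] at happ
          exact happ
        -- chain of inequalities
        have d1 : ‖∑ n ∈ S, e' n x • e n‖ ≤ K * ‖∑ n ∈ S, (fun _ => lam) n • e n‖ := by
          rw [hK]
          refine my_dom e e' hbi C hU S (fun n => e' n x) (fun _ => lam) ?_
          intro n hn
          simpa [abs_of_nonneg hlam0] using hSle n hn
        have d2 : ‖∑ n ∈ S, (fun _ => lam) n • e n‖ = lam * ‖∑ n ∈ S, (1:ℝ) • e n‖ := by
          have : ∑ n ∈ S, (fun _ => lam) n • e n = lam • ∑ n ∈ S, (1:ℝ) • e n := by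
            rw [Finset.smul_sum]
            exact Finset.sum_congr rfl fun n _ => by rw [smul_smul, mul_one]
          rw [this, norm_smul, Real.norm_eq_abs, abs_of_nonneg hlam0]
        have d3 : lam * ‖∑ n ∈ T, ε n • e n‖ = ‖∑ n ∈ T, (lam * ε n) • e n‖ := by
          have : ∑ n ∈ T, (lam * ε n) • e n = lam • ∑ n ∈ T, ε n • e n := by
            rw [Finset.smul_sum]
            exact Finset.sum_congr rfl fun n _ => by rw [smul_smul]
          rw [this, norm_smul, Real.norm_eq_abs, abs_of_nonneg hlam0]
        have d4 : ‖∑ n ∈ T, (lam * ε n) • e n‖ ≤ K * ‖∑ n ∈ T, e' n x • e n‖ := by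
          rw [hK]
          refine my_dom e e' hbi C hU T (fun n => lam * ε n) (fun n => e' n x) ?_
          intro n hn
          rw [abs_mul, hεabs n, mul_one, abs_of_nonneg hlam0]
          exact hmin n hn
        have d5 : ∑ n ∈ T, e' n x • e n = ∑ n ∈ T, e' n (x - z) • e n := by
          refine Finset.sum_congr rfl fun n hn => ?_
          have hnB : n ∉ B := (Finset.mem_sdiff.1 hn).2
          rw [map_sub, hzcoef n, if_neg hnB, sub_zero]
        have d6 : ‖∑ n ∈ T, e' n (x - z) • e n‖ ≤ (1 + C) * ‖x - z‖ := hproj (x - z) T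
        have hTbound : ‖∑ n ∈ T, e' n x • e n‖ ≤ (1 + C) * ‖x - z‖ := by
          rw [d5]; exact d6
        calc ‖∑ n ∈ S, e' n x • e n‖
            ≤ K * ‖∑ n ∈ S, (fun _ => lam) n • e n‖ := d1
          _ = K * (lam * ‖∑ n ∈ S, (1:ℝ) • e n‖) := by rw [d2]
          _ ≤ K * (lam * (C * ‖∑ n ∈ T, ε n • e n‖)) := by
              have := mul_le_mul_of_nonneg_left hsd hlam0
              exact mul_le_mul_of_nonneg_left this (le_of_lt hKpos)
          _ = K * C * (lam * ‖∑ n ∈ T, ε n • e n‖) := by ring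
          _ = K * C * ‖∑ n ∈ T, (lam * ε n) • e n‖ := by rw [d3]
          _ ≤ K * C * (K * ‖∑ n ∈ T, e' n x • e n‖) := by
              refine mul_le_mul_of_nonneg_left d4 ?_
              positivity
          _ ≤ K * C * (K * ((1 + C) * ‖x - z‖)) := by
              refine mul_le_mul_of_nonneg_left ?_ (by positivity)
              exact mul_le_mul_of_nonneg_left hTbound (le_of_lt hKpos)
          _ = (K^2*C*(1+C)) * ‖x - z‖ := by ring
    calc ‖x - ∑ n ∈ A, e' n x • e n‖
        = ‖(((x - z) - ∑ n ∈ A, e' n (x - z) • e n)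
            - ∑ n ∈ S, e' n (x - z) • e n) + ∑ n ∈ S, e' n x • e n‖ := by rw [key]
      _ ≤ ‖((x - z) - ∑ n ∈ A, e' n (x - z) • e n)
            - ∑ n ∈ S, e' n (x - z) • e n‖ + ‖∑ n ∈ S, e' n x • e n‖ := norm_add_le _ _
      _ ≤ (‖(x - z) - ∑ n ∈ A, e' n (x - z) • e n‖
            + ‖∑ n ∈ S, e' n (x - z) • e n‖) + ‖∑ n ∈ S, e' n x • e n‖ := by
          gcongr
          exact norm_sub_le _ _
      _ ≤ (C * ‖x - z‖ + (1 + C) * ‖x - z‖) + (K^2*C*(1+C)) * ‖x - z‖ := by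
          gcongr
      _ = (C + (1 + C) + K^2*C*(1+C)) * ‖x - z‖ := by ring
  · rintro ⟨C', hC', hg⟩
    refine ⟨C', hC', ?_⟩
    intro x A hA α B η hcard _
    have h := hg x A hA B (fun n => α * η n) hcard
    have hrw : ∑ n ∈ B, (α * η n) • e n = α • ∑ n ∈ B, η n • e n := by
      rw [Finset.smul_sum]
      exact Finset.sum_congr rfl fun n _ => (smul_smul α (η n) (e n)).symm
    rwa [hrw] at h
end

section
/- Let ℬ be a normalized Schauder basis of X and ω a positive weight sequence, and suppose ℬ has the (s,ω)-PCCG property with constant D(s): ‖y − Gˢ(y)‖ ≤ D(s)·𝒟^ω_{ω(A)}(y) for every s-greedy set A of y with Gˢ(y) = P_A(y). Then the coordinate projections are uniformly bounded: ‖z − P_C(z)‖ ≤ D(s)·‖z‖ for every z ∈ X and every finite set C ⊂ ℕ, and consequently ‖P_C(z)‖ ≤ (1 + D(s))·‖z‖. -/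
open Finset

theorem stmt10 {X : Type*} [NormedAddCommGroup X] [NormedSpace ℝ X] [CompleteSpace X]
    (e : ℕ → X) (e' : ℕ → X →L[ℝ] ℝ)
    (hnorm : ∀ n, ‖e n‖ = 1)
    (hbi : ∀ n m, e' n (e m) = if n = m then 1 else 0)
    (hbasis : ∀ x : X,
      Filter.Tendsto (fun N => ∑ n ∈ Finset.range N, e' n x • e n) Filter.atTop (nhds x))
    (ω : ℕ → ℝ) (hω : ∀ n, 0 < ω n)
    (s D : ℝ) (hs0 : 0 < s) (hs1 : s ≤ 1) (hD : 0 < D)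
    -- `(s,ω)`-PCCG property with constant `D`
    (hyp : ∀ (y : X) (A : Finset ℕ),
      (∀ a ∈ A, ∀ b ∉ A, s * |e' b y| ≤ |e' a y|) →
      ∀ (α : ℝ) (B : Finset ℕ) (η : ℕ → ℝ),
        (∑ n ∈ B, ω n) ≤ (∑ n ∈ A, ω n) → (∀ n ∈ B, η n = 1 ∨ η n = -1) →
        ‖y - ∑ n ∈ A, e' n y • e n‖ ≤ D * ‖y - α • ∑ n ∈ B, η n • e n‖) :
    ∀ (z : X) (C : Finset ℕ),
      ‖z - ∑ n ∈ C, e' n z • e n‖ ≤ D * ‖z‖ ∧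
      ‖∑ n ∈ C, e' n z • e n‖ ≤ (1 + D) * ‖z‖ := by
  intro z C
  -- coefficients of z tend to 0, hence bounded
  have hterm : Filter.Tendsto (fun n => |e' n z|) Filter.atTop (nhds 0) := by
    have h1 : Filter.Tendsto (fun N => (∑ n ∈ Finset.range (N+1), e' n z • e n)
        - ∑ n ∈ Finset.range N, e' n z • e n) Filter.atTop (nhds (z - z)) :=
      ((hbasis z).comp (Filter.tendsto_add_atTop_nat 1)).sub (hbasis z)
    rw [sub_self] at h1
    have h2 : (fun N => (∑ n ∈ Finset.range (N+1), e' n z • e n)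
        - ∑ n ∈ Finset.range N, e' n z • e n) = fun N => e' N z • e N := by
      funext N; rw [Finset.sum_range_succ]; abel
    rw [h2] at h1
    have h3 : Filter.Tendsto (fun N => ‖e' N z • e N‖) Filter.atTop (nhds 0) := by
      simpa using h1.norm
    have h4 : (fun N => ‖e' N z • e N‖) = fun N => |e' N z| := by
      funext N; rw [norm_smul, hnorm, mul_one, Real.norm_eq_abs]
    rwa [h4] at h3
    -- bounded
  obtain ⟨M, hM⟩ := hterm.bddAbove_range
  simp only [mem_upperBounds, Set.mem_range, forall_exists_index] at hM
  have hMb : ∀ n, |e' n z| ≤ M := fun n => hM _ n rfl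
  have hM0 : 0 ≤ M := le_trans (abs_nonneg _) (hMb 0)
  set μ : ℝ := s * M + M with hμ
  set y : X := z + μ • ∑ n ∈ C, e n with hy
  have hcoef : ∀ k, e' k y = e' k z + (if k ∈ C then μ else 0) := by
    intro k
    rw [hy]
    rw [map_add, map_smul, map_sum]
    simp only [hbi, smul_eq_mul]
    rw [Finset.sum_ite_eq C k (fun _ => (1:ℝ))]
    by_cases hk : k ∈ C <;> simp [hk]
  have hgreedy : ∀ a ∈ C, ∀ b ∉ C, s * |e' b y| ≤ |e' a y| := by
    intro a ha b hb
    rw [hcoef a, hcoef b, if_pos ha, if_neg hb, add_zero]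
    have h1 : s * |e' b z| ≤ s * M := by
      exact mul_le_mul_of_nonneg_left (hMb b) hs0.le
    refine h1.trans ?_
    have h2 : μ - |e' a z| ≤ |e' a z + μ| := by
      have h3 := abs_sub_abs_le_abs_sub μ (-(e' a z))
      rw [abs_neg, sub_neg_eq_add, add_comm] at h3
      have hμa : |μ| = μ := abs_of_nonneg (by positivity)
      linarith
    linarith [hMb a]
  have key := hyp y C hgreedy μ C (fun _ => 1) le_rfl (fun n _ => Or.inl rfl)
  have hsum : (∑ n ∈ C, e' n y • e n) = (∑ n ∈ C, e' n z • e n) + μ • ∑ n ∈ C, e n := by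
    rw [Finset.smul_sum, ← Finset.sum_add_distrib]
    refine Finset.sum_congr rfl fun n hn => ?_
    rw [hcoef n, if_pos hn, add_smul]
  have hleft : y - ∑ n ∈ C, e' n y • e n = z - ∑ n ∈ C, e' n z • e n := by
    rw [hsum, hy]; abel
  have hright : y - μ • ∑ n ∈ C, (fun _ => (1:ℝ)) n • e n = z := by
    simp only [one_smul]; rw [hy]; abel
  rw [hleft, hright] at key
  refine ⟨key, ?_⟩
  have : ‖∑ n ∈ C, e' n z • e n‖ ≤ ‖z‖ + ‖z - ∑ n ∈ C, e' n z • e n‖ := by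
    have := norm_sub_le z (z - ∑ n ∈ C, e' n z • e n)
    simpa using this
  nlinarith [norm_nonneg z]
end

section
/- For an orthonormal basis (eₙ) of an infinite-dimensional Hilbert space H and any x ∈ H, the best m-term approximation with respect to polynomials with constant coefficients 𝒟*_m(x) = inf{ ‖x − α·∑_{n∈A} ηₙeₙ‖ : α ∈ ℝ, |A| = m, ηₙ ∈ {±1} } tends to ‖x‖ as m → ∞. -/
open Finset
open scoped RealInnerProductSpace

set_option maxHeartbeats 1000000 in
theorem stmt13 {H : Type*} [NormedAddCommGroup H] [InnerProductSpace ℝ H] [CompleteSpace H]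
    (e : ℕ → H) (he : Orthonormal ℝ e)
    (htotal : (Submodule.span ℝ (Set.range e)).topologicalClosure = ⊤)
    (x : H) :
    Filter.Tendsto
      (fun m : ℕ => sInf {r : ℝ | ∃ (α : ℝ) (A : Finset ℕ) (η : ℕ → ℝ),
        A.card = m ∧ (∀ n ∈ A, η n = 1 ∨ η n = -1) ∧
        r = ‖x - α • ∑ n ∈ A, η n • e n‖})
      Filter.atTop (nhds ‖x‖) := by
  classical
  set S : ℕ → Set ℝ := fun m => {r : ℝ | ∃ (α : ℝ) (A : Finset ℕ) (η : ℕ → ℝ),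
        A.card = m ∧ (∀ n ∈ A, η n = 1 ∨ η n = -1) ∧
        r = ‖x - α • ∑ n ∈ A, η n • e n‖} with hS
  have hmem : ∀ m, ‖x‖ ∈ S m := by
    intro m
    exact ⟨0, Finset.range m, fun _ => 1, by simp⟩
  have hlb0 : ∀ m, ∀ r ∈ S m, (0:ℝ) ≤ r := by
    rintro m r ⟨α, A, η, -, -, rfl⟩; positivity
  have hbdd : ∀ m, BddBelow (S m) := fun m => ⟨0, hlb0 m⟩
  have hub : ∀ m, sInf (S m) ≤ ‖x‖ := fun m => csInf_le (hbdd m) (hmem m)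
  -- summability of squared coefficients
  set c : ℕ → ℝ := fun n => (inner ℝ x (e n) : ℝ) with hc
  have hsum : Summable fun n => c n ^ 2 := by
    have h := he.inner_products_summable (x := x)
    convert h using 2 with n
    rw [real_inner_comm]
    simp [hc, Real.norm_eq_abs, sq_abs]
  rw [Metric.tendsto_atTop]
  intro ε hε
  -- it suffices to get a lower bound ‖x‖ - ε/2 ≤ sInf (S m) eventually
  suffices hs : ∃ M : ℕ, ∀ m ≥ M, ‖x‖ - ε/2 ≤ sInf (S m) by
    obtain ⟨M, hM⟩ := hs
    refine ⟨M, fun m hm => ?_⟩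
    have h1 := hub m
    have h2 := hM m hm
    rw [Real.dist_eq, abs_lt]
    constructor <;> linarith
  by_cases hx : ‖x‖ ≤ ε/2
  · refine ⟨0, fun m _ => ?_⟩
    have : (0:ℝ) ≤ sInf (S m) := le_csInf ⟨_, hmem m⟩ (hlb0 m)
    linarith
  push_neg at hx
  have hxpos : 0 < ‖x‖ := lt_trans (by positivity) hx
  set δ : ℝ := ε/2 with hδ
  have hδpos : 0 < δ := by positivity
  set ε' : ℝ := δ * ‖x‖ / 4 with hε'
  have hε'pos : 0 < ε' := by positivity
  -- choose N such that the tail of ∑ c n ^ 2 beyond range N is < ε'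
  obtain ⟨N, hN⟩ := (Metric.tendsto_atTop.mp hsum.hasSum.tendsto_sum_nat) ε' hε'pos
  have htail : (∑' n, c n ^ 2) - ∑ n ∈ Finset.range N, c n ^ 2 < ε' := by
    have := hN N le_rfl
    rw [Real.dist_eq, abs_lt] at this
    linarith [this.1]
  set C : ℝ := ∑ n ∈ Finset.range N, |c n| with hC
  have hCnn : 0 ≤ C := Finset.sum_nonneg fun _ _ => abs_nonneg _
  obtain ⟨M₀, hM₀⟩ := exists_nat_gt (8 * C^2 / (δ * ‖x‖))
  refine ⟨max M₀ 1, fun m hm => ?_⟩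
  have hm1 : 1 ≤ m := le_trans (le_max_right _ _) hm
  have hmpos : (0:ℝ) < (m:ℝ) := by exact_mod_cast hm1
  have hmM : (8 * C^2 / (δ * ‖x‖)) < (m:ℝ) := by
    calc 8 * C^2 / (δ * ‖x‖) < (M₀:ℕ) := hM₀
    _ ≤ (m:ℝ) := by exact_mod_cast le_trans (le_max_left _ _) hm
  have hCm : 2 * C^2 / m < δ * ‖x‖ / 4 := by
    rw [div_lt_iff₀ hmpos]
    rw [div_lt_iff₀ (by positivity : (0:ℝ) < δ * ‖x‖)] at hmM
    nlinarith
  -- lower bound each element of S m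
  refine le_csInf ⟨_, hmem m⟩ ?_
  rintro r ⟨α, A, η, hcard, hη, rfl⟩
  set s : H := ∑ n ∈ A, η n • e n with hs
  -- compute ‖s‖² = m and ⟪x, s⟫
  have hη2 : ∀ n ∈ A, η n ^ 2 = 1 := by
    intro n hn
    rcases hη n hn with h | h <;> rw [h] <;> norm_num
  have hss : (inner ℝ s s : ℝ) = (m:ℝ) := by
    rw [hs, he.inner_sum]
    rw [← hcard]
    rw [Finset.card_eq_sum_ones A]
    push_cast
    refine Finset.sum_congr rfl fun n hn => ?_
    have := hη2 n hn
    simp only [starRingEnd_apply, star_trivial]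
    nlinarith [hη2 n hn]
  set t : ℝ := ∑ n ∈ A, η n * c n with ht
  have hxs : (inner ℝ x s : ℝ) = t := by
    rw [hs, inner_sum]
    refine Finset.sum_congr rfl fun n hn => ?_
    rw [real_inner_smul_right]
  -- expansion of the norm
  have hexp : ‖x - α • s‖ ^ 2 = ‖x‖^2 - 2 * α * t + α^2 * m := by
    rw [norm_sub_sq_real, real_inner_smul_right, hxs, norm_smul]
    have : ‖s‖^2 = (m:ℝ) := by rw [← real_inner_self_eq_norm_sq, hss]
    rw [mul_pow]
    rw [this]
    simp [Real.norm_eq_abs, sq_abs]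
    ring
  -- minimizing over α
  have hmin : ‖x‖^2 - t^2 / m ≤ ‖x - α • s‖ ^ 2 := by
    rw [hexp]
    have h1 : (2 * α * t - α^2 * m) * m ≤ t^2 := by nlinarith [sq_nonneg (t - α * m)]
    have h2 : 2 * α * t - α^2 * m ≤ t^2 / m := by
      rw [le_div_iff₀ hmpos]; exact h1
    linarith
  -- bound t² ≤ 2C² + 2 m ε'
  have hsplit : t = (∑ n ∈ A ∩ Finset.range N, η n * c n) +
      ∑ n ∈ A \ Finset.range N, η n * c n := by
    rw [ht, ← Finset.sum_inter_add_sum_sdiff A (Finset.range N) (fun n => η n * c n)]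
  set t₁ : ℝ := ∑ n ∈ A ∩ Finset.range N, η n * c n with ht₁
  set t₂ : ℝ := ∑ n ∈ A \ Finset.range N, η n * c n with ht₂
  have ht₁b : |t₁| ≤ C := by
    calc |t₁| ≤ ∑ n ∈ A ∩ Finset.range N, |η n * c n| := Finset.abs_sum_le_sum_abs _ _
    _ = ∑ n ∈ A ∩ Finset.range N, |c n| := by
        refine Finset.sum_congr rfl fun n hn => ?_
        rcases hη n (Finset.mem_of_mem_inter_left hn) with h | h <;> rw [h] <;> simp
    _ ≤ C := Finset.sum_le_sum_of_subset_of_nonneg (Finset.inter_subset_right)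
        fun n _ _ => abs_nonneg _
  have htailA : ∑ n ∈ A \ Finset.range N, c n ^ 2 ≤ ε' := by
    have hdisj : Disjoint (Finset.range N) (A \ Finset.range N) := disjoint_sdiff_self_right
    have hle : ∑ n ∈ Finset.range N ∪ (A \ Finset.range N), c n ^ 2 ≤ ∑' n, c n ^ 2 :=
      Summable.sum_le_tsum _ (fun n _ => sq_nonneg _) hsum
    rw [Finset.sum_union hdisj] at hle
    linarith
  have ht₂b : t₂ ^ 2 ≤ (m:ℝ) * ε' := by
    have hcs := Finset.sum_mul_sq_le_sq_mul_sq (A \ Finset.range N) η c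
    have hcard2 : ∑ n ∈ A \ Finset.range N, η n ^ 2 = ((A \ Finset.range N).card : ℝ) := by
      rw [Finset.card_eq_sum_ones]
      push_cast
      exact Finset.sum_congr rfl fun n hn => hη2 n (Finset.mem_sdiff.mp hn).1
    have hcardle : ((A \ Finset.range N).card : ℝ) ≤ (m:ℝ) := by
      exact_mod_cast hcard ▸ Finset.card_le_card (Finset.sdiff_subset)
    calc t₂ ^ 2 ≤ (∑ n ∈ A \ Finset.range N, η n ^ 2) * ∑ n ∈ A \ Finset.range N, c n ^ 2 :=
          hcs
    _ ≤ (m:ℝ) * ε' := by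
        rw [hcard2]
        have h0 : (0:ℝ) ≤ ∑ n ∈ A \ Finset.range N, c n ^ 2 :=
          Finset.sum_nonneg fun _ _ => sq_nonneg _
        exact mul_le_mul hcardle htailA h0 (by positivity)
  have htb : t ^ 2 ≤ 2 * C^2 + 2 * m * ε' := by
    have hab := abs_le.mp ht₁b
    have h1 : t₁^2 ≤ C^2 := sq_le_sq' (by linarith [hab.1]) hab.2
    rw [hsplit]
    nlinarith [sq_nonneg (t₁ - t₂)]
  -- conclude
  have hkey : ‖x‖^2 - δ * ‖x‖ ≤ ‖x - α • s‖ ^ 2 := by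
    have h1 : t^2 / m ≤ 2 * C^2 / m + 2 * ε' := by
      rw [div_le_iff₀ hmpos, add_mul, div_mul_cancel₀ _ (ne_of_gt hmpos)]
      nlinarith
    have h2 : t^2 / m < δ * ‖x‖ := by
      rw [hε'] at h1
      linarith
    linarith [hmin]
  have hδx : δ ≤ ‖x‖ := le_of_lt hx
  have hr0 : (0:ℝ) ≤ ‖x - α • s‖ := norm_nonneg _
  have hfinal : (‖x‖ - δ)^2 ≤ ‖x - α • s‖ ^ 2 := by nlinarith
  have : ‖x‖ - δ ≤ ‖x - α • s‖ := by nlinarith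
  linarith
end

section
/- Let X be a Banach space with normalized Schauder basis, x ∈ X, 0 < t ≤ 1, let A be a t-greedy set for x, and let B be any finite set. For any signs η on B∖A, define y_η = x − P_B(x) + (t/s)·γ·1_{η(B∖A)} where 0 < s ≤ t and γ = max_{j∈B∖A}|e_j*(x)| (with γ possibly 0). Then A∖B is an s-greedy set for y_η, i.e., min_{n∈A∖B}|eₙ*(y_η)| ≥ s·max_{n∉A∖B}|eₙ*(y_η)|. -/
open Finset

lemma eval_sum_aux {X : Type*} [NormedAddCommGroup X] [NormedSpace ℝ X]
    (e : ℕ → X) (e' : ℕ → X →L[ℝ] ℝ)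
    (hbi : ∀ n m, e' n (e m) = if n = m then 1 else 0)
    (S : Finset ℕ) (c : ℕ → ℝ) (m : ℕ) :
    e' m (∑ n ∈ S, c n • e n) = if m ∈ S then c m else 0 := by
  rw [map_sum]
  simp only [map_smul, hbi, smul_eq_mul]
  rw [Finset.sum_congr rfl (fun n hn => by rw [mul_ite, mul_one, mul_zero])]
  simp [Finset.sum_ite_eq' S m c, eq_comm]

theorem stmt17 {X : Type*} [NormedAddCommGroup X] [NormedSpace ℝ X]
    (e : ℕ → X) (e' : ℕ → X →L[ℝ] ℝ)
    (hnorm : ∀ n, ‖e n‖ = 1)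
    (hbi : ∀ n m, e' n (e m) = if n = m then 1 else 0)
    (x : X) (t s γ : ℝ) (ht0 : 0 < t) (ht1 : t ≤ 1) (hs0 : 0 < s) (hst : s ≤ t)
    (A B : Finset ℕ)
    -- `A` is a `t`-greedy set for `x`
    (hA : ∀ a ∈ A, ∀ b ∉ A, t * |e' b x| ≤ |e' a x|)
    -- `γ = max_{j ∈ B \ A} |e_j^*(x)|` (and `γ = 0` if `B \ A = ∅`)
    (hγ1 : ∀ j ∈ B \ A, |e' j x| ≤ γ)
    (hγ2 : (B \ A).Nonempty → ∃ j ∈ B \ A, γ = |e' j x|)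
    (hγ3 : B \ A = ∅ → γ = 0)
    (η : ℕ → ℝ) (hη : ∀ n ∈ B \ A, η n = 1 ∨ η n = -1) :
    -- `A \ B` is an `s`-greedy set for `y_η = x − P_B(x) + (t/s)γ·1_{η(B∖A)}`
    ∀ a ∈ A \ B, ∀ b ∉ A \ B,
      s * |e' b (x - ∑ n ∈ B, e' n x • e n + ((t / s) * γ) • ∑ n ∈ B \ A, η n • e n)|
        ≤ |e' a (x - ∑ n ∈ B, e' n x • e n + ((t / s) * γ) • ∑ n ∈ B \ A, η n • e n)| := by
  intro a ha b hb
  rw [Finset.mem_sdiff] at ha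
  obtain ⟨haA, haB⟩ := ha
  have key : ∀ m : ℕ, e' m (x - ∑ n ∈ B, e' n x • e n + ((t / s) * γ) • ∑ n ∈ B \ A, η n • e n)
      = e' m x - (if m ∈ B then e' m x else 0) + (t / s) * γ * (if m ∈ B \ A then η m else 0) := by
    intro m
    rw [map_add, map_sub, map_smul, eval_sum_aux e e' hbi, eval_sum_aux e e' hbi]
    simp only [smul_eq_mul]
  rw [key a, key b]
  have haB2 : a ∉ B \ A := fun h => haB (Finset.mem_sdiff.mp h).1
  simp only [if_neg haB, if_neg haB2, sub_zero, mul_zero, add_zero]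
  by_cases hbB : b ∈ B \ A
  · simp only [if_pos (Finset.mem_sdiff.mp hbB).1, if_pos hbB]
    have hηb : |η b| = 1 := by rcases hη b hbB with h | h <;> simp [h]
    rw [sub_self, zero_add, abs_mul, abs_mul, hηb, mul_one,
        abs_of_pos (div_pos ht0 hs0)]
    have hγnn : 0 ≤ γ := le_trans (abs_nonneg _) (hγ1 _ hbB)
    rw [abs_of_nonneg hγnn]
    rw [show s * (t / s * γ) = t * γ by field_simp]
    obtain ⟨j, hj, hjγ⟩ := hγ2 ⟨b, hbB⟩
    rw [hjγ]
    exact hA a haA j (Finset.mem_sdiff.mp hj).2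
  · by_cases hbA : b ∈ A
    · have hbB' : b ∈ B := by
        by_contra h
        exact hb (Finset.mem_sdiff.mpr ⟨hbA, h⟩)
      simp only [if_pos hbB', if_neg hbB]
      simp [abs_nonneg]
    · have hbB' : b ∉ B := fun h => hbB (Finset.mem_sdiff.mpr ⟨h, hbA⟩)
      simp only [if_neg hbB', if_neg hbB, sub_zero, mul_zero, add_zero]
      calc s * |e' b x| ≤ t * |e' b x| :=
            mul_le_mul_of_nonneg_right hst (abs_nonneg _)
        _ ≤ |e' a x| := hA a haA b hbA
end
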